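/- Assume conditions S1–S4 on the initial measure μ₀. Then the limit correlation functions satisfy |𝐪₀^{ij}(z)| ≤ C e₀ φ^{1/2}(|z|) for z ∈ ℤ^d, hence 𝐪₀^{ij} ∈ ℓ¹(ℤ^d), and their Fourier transforms 𝐪̂₀^{ij}(θ) = ∑_{z∈ℤ^d} 𝐪₀^{ij}(z)e^{iz·θ} are continuous on 𝕋^d, for i,j = 0,1. -/

import Mathlib

open MeasureTheory Filter Topology Matrix
open scoped BigOperators Real ComplexOrder ENNReal NNReal

noncomputable section

namespace HCryst

variable (d n : ℕ) [NeZero d]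

/-- The lattice `ℤ^d`. -/
abbrev Lat := Fin d → ℤ

/-- The open half-lattice `ℤ^d_+ = {z : z₁ > 0}`. -/
abbrev LatP := {z : Fin d → ℤ // 0 < z 0}

/-- Reflection `z ↦ z̃ = (−z₁, z̄)`. -/
def til (z : Lat d) : Lat d := Function.update z 0 (-(z 0))

/-- `|z|²`. -/
def zsq (z : Lat d) : ℝ := ∑ i, ((z i : ℝ))^2

/-- Euclidean norm `|z|` of a lattice point. -/
def znorm (z : Lat d) : ℝ := Real.sqrt (zsq d z)

/-- Values of the field at one site: `ℝ^n × ℝ^n`. -/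
abbrev Pt := (Fin n → ℝ) × (Fin n → ℝ)

/-- Field configurations: functions `ℤ^d → ℝ^n × ℝ^n`. -/
abbrev Conf := Lat d → Pt n

/-- Squared Euclidean length `|Y(z)|² = |Y⁰(z)|² + |Y¹(z)|²`. -/
def vsq (v : Pt n) : ℝ := (∑ a, (v.1 a)^2) + (∑ a, (v.2 a)^2)

/-- The weight `(1+|z|²)^α`. -/
def wt (α : ℝ) (z : Lat d) : ℝ := (1 + zsq d z) ^ α

/-- Membership in `H_α`: the weighted square norm is finite. -/
def MemH (α : ℝ) (X : Conf d n) : Prop :=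
  Summable fun z : Lat d => vsq n (X z) * wt d α z

/-- The squared norm `‖X‖²_α`. -/
def normSqH (α : ℝ) (X : Conf d n) : ℝ := ∑' z : Lat d, vsq n (X z) * wt d α z

/-- A half-space configuration: vanishes unless `z₁ > 0` (this includes the
zero boundary condition at `z₁ = 0`). -/
def PlusSupp (Y : Conf d n) : Prop := ∀ z : Lat d, ¬ (0 < z 0) → Y z = 0

/-- Membership in `H_{α,+}`. -/
def MemHP (α : ℝ) (Y : Conf d n) : Prop :=
  Summable fun z : LatP d => vsq n (Y z.1) * wt d α z.1

/-- The squared norm `‖Y‖²_{α,+}`. -/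
def normSqHP (α : ℝ) (Y : Conf d n) : ℝ := ∑' z : LatP d, vsq n (Y z.1) * wt d α z.1

/-- `‖Y‖²_{α,+}` with values in `ℝ≥0∞`. -/
def enormSqHP (α : ℝ) (Y : Conf d n) : ℝ≥0∞ :=
  ∑' z : LatP d, ENNReal.ofReal (vsq n (Y z.1) * wt d α z.1)

/-- Frobenius norm of a real matrix. -/
def mnormR {m : Type*} [Fintype m] (M : Matrix m m ℝ) : ℝ :=
  Real.sqrt (∑ i, ∑ j, (M i j)^2)

/-- Frobenius norm of a complex matrix. -/
def mnormC {m : Type*} [Fintype m] (M : Matrix m m ℂ) : ℝ :=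
  Real.sqrt (∑ i, ∑ j, ‖M i j‖^2)

variable (V : Lat d → Matrix (Fin n) (Fin n) ℝ)

/-- Condition E1: exponential decay of the interaction matrix. -/
def CondE1 : Prop :=
  ∃ C γ : ℝ, 0 < C ∧ 0 < γ ∧ ∀ z : Lat d, mnormR (V z) ≤ C * Real.exp (-γ * znorm d z)

/-- Condition E2: `V_{lk}(−z) = V_{kl}(z)`. -/
def CondE2 : Prop := ∀ (z : Lat d) (k l : Fin n), V (-z) l k = V z k l

/-- The symmetry condition `V(z) = V(z̃)`. -/
def CondSym : Prop := ∀ z : Lat d, V (til d z) = V z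

/-- The convolution operator `(𝓥u)(z) = ∑_{z'} V(z−z') u(z')`. -/
def convV (u : Lat d → Fin n → ℝ) (z : Lat d) : Fin n → ℝ :=
  ∑' z' : Lat d, (V (z - z')).mulVec (u z')

/-- The half-space operator `(𝓥₊u)(z) = ∑_{z'∈ℤ^d_+} (V(z−z') − V(z−z̃')) u(z')`. -/
def convVP (u : Lat d → Fin n → ℝ) (z : Lat d) : Fin n → ℝ :=
  ∑' z' : LatP d, ((V (z - z'.1) - V (z - til d z'.1)).mulVec (u z'.1))

/-- `X : ℝ → H_α` is a solution of the whole-space dynamics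
`Ẋ = 𝓐X`, lying in `C(ℝ, H_α)`. -/
def IsSol (α : ℝ) (X : ℝ → Conf d n) : Prop :=
  (∀ t, MemH d n α (X t)) ∧
  (∀ (z : Lat d) (t : ℝ), HasDerivAt (fun s => (X s z).1) ((X t z).2) t) ∧
  (∀ (z : Lat d) (t : ℝ), HasDerivAt (fun s => (X s z).2)
      (-(convV d n V (fun w => (X t w).1) z)) t) ∧
  (∀ t : ℝ, ∀ ε > (0:ℝ), ∃ δ > (0:ℝ), ∀ s : ℝ, |s - t| < δ →
      normSqH d n α (X s - X t) < ε)

/-- `Y : ℝ → H_{α,+}` is a solution of the half-space mixed problem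
(zero boundary condition included in `PlusSupp`), lying in `C(ℝ, H_{α,+})`. -/
def IsSolP (α : ℝ) (Y : ℝ → Conf d n) : Prop :=
  (∀ t, PlusSupp d n (Y t)) ∧
  (∀ t, MemHP d n α (Y t)) ∧
  (∀ z : Lat d, 0 < z 0 → ∀ t : ℝ, HasDerivAt (fun s => (Y s z).1) ((Y t z).2) t) ∧
  (∀ z : Lat d, 0 < z 0 → ∀ t : ℝ, HasDerivAt (fun s => (Y s z).2)
      (-(convVP d n V (fun w => (Y t w).1) z)) t) ∧
  (∀ t : ℝ, ∀ ε > (0:ℝ), ∃ δ > (0:ℝ), ∀ s : ℝ, |s - t| < δ →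
      normSqHP d n α (Y s - Y t) < ε)

/-- `z·θ`. -/
def zdot (z : Lat d) (θ : Fin d → ℝ) : ℝ := ∑ i, (z i : ℝ) * θ i

/-- Fourier transform `V̂(θ) = ∑_z V(z) e^{i z·θ}`. -/
def Vhat (θ : Fin d → ℝ) : Matrix (Fin n) (Fin n) ℂ :=
  Matrix.of fun k l => ∑' z : Lat d, Complex.exp (Complex.I * (zdot d z θ : ℂ)) * ((V z k l : ℝ) : ℂ)

/-- Condition E3: `V̂(θ) ≥ 0`. -/
def CondE3 : Prop := ∀ θ : Fin d → ℝ, (Vhat d n V θ).PosSemidef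

/-- `Ω(θ) = V̂(θ)^{1/2}`. -/
def OmegaM (h : CondE3 d n V) (θ : Fin d → ℝ) : Matrix (Fin n) (Fin n) ℂ :=
  ((h θ).1.eigenvectorUnitary : Matrix (Fin n) (Fin n) ℂ) *
    diagonal (((↑) : ℝ → ℂ) ∘ Real.sqrt ∘ (h θ).1.eigenvalues) *
    (star (h θ).1.eigenvectorUnitary : Matrix (Fin n) (Fin n) ℂ)

/-- Fundamental domain of the torus `𝕋^d`. -/
def box : Set (Fin d → ℝ) := Set.univ.pi fun _ : Fin d => Set.Ioc (-Real.pi) Real.pi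

/-- Index type for `2n × 2n` block matrices. -/
abbrev I2 := Fin n ⊕ Fin n

/-- The generator `Â(θ) = [[0,1],[−V̂(θ),0]]`. -/
def Ahat (θ : Fin d → ℝ) : Matrix (I2 n) (I2 n) ℂ :=
  Matrix.fromBlocks 0 1 (-(Vhat d n V θ)) 0

/-- The (complex) Green function `G_t(z) = (2π)^{-d} ∫_{𝕋^d} e^{−iz·θ} exp(Â(θ)t) dθ`. -/
def GreenC (t : ℝ) (z : Lat d) : Matrix (I2 n) (I2 n) ℂ :=
  Matrix.of fun a b => (((2*Real.pi)^d : ℝ) : ℂ)⁻¹ *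
    ∫ θ in box d, Complex.exp (-(Complex.I) * (zdot d z θ : ℂ)) *
      (NormedSpace.exp (t • Ahat d n V θ) a b)

/-- The real Green function (the Green function is real-valued). -/
def GreenR (t : ℝ) (z : Lat d) : Matrix (I2 n) (I2 n) ℝ :=
  (GreenC d n V t z).map Complex.re

/-- `Y(z) ∈ ℝ^n × ℝ^n` viewed as a `2n`-vector. -/
def comp2 (v : Pt n) : I2 n → ℝ := Sum.elim v.1 v.2

/-- A `2n`-vector viewed as an element of `ℝ^n × ℝ^n`. -/
def mk2 (w : I2 n → ℝ) : Pt n := (fun a => w (Sum.inl a), fun a => w (Sum.inr a))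

/-- Action of a `2n × 2n` matrix on `ℝ^n × ℝ^n`. -/
def mul2 (M : Matrix (I2 n) (I2 n) ℝ) (v : Pt n) : Pt n := mk2 n (M.mulVec (comp2 n v))

/-- The half-space Green function `G_{t,+}(z,z') = G_t(z−z') − G_t(z−z̃')`. -/
def GreenPlus (t : ℝ) (z z' : Lat d) : Matrix (I2 n) (I2 n) ℝ :=
  GreenR d n V t (z - z') - GreenR d n V t (z - til d z')

/-- The solution operator `U₊(t)` of the half-space problem, given by the
Green function representation `Y(z,t) = ∑_{z'∈ℤ^d_+} G_{t,+}(z,z') Y₀(z')`. -/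
def Uplus (t : ℝ) (Y : Conf d n) : Conf d n := fun z =>
  if 0 < z 0 then ∑' z' : LatP d, mul2 n (GreenPlus d n V t z z'.1) (Y z'.1) else 0

/-- The measure `μ_t`, distribution of the random solution `Y(t)`. -/
def μt (μ₀ : Measure (Conf d n)) (t : ℝ) : Measure (Conf d n) := μ₀.map (Uplus d n V t)

/-- The correlation matrix `Q_μ(z,z') = E (Y(z) ⊗ Y(z'))` (a `2n×2n` matrix). -/
def Qmat (μ : Measure (Conf d n)) (z z' : Lat d) : Matrix (I2 n) (I2 n) ℝ :=
  Matrix.of fun a b => ∫ Y : Conf d n, comp2 n (Y z) a * comp2 n (Y z') b ∂μ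

/-- Condition S1: zero mean. -/
def CondS1 (μ : Measure (Conf d n)) : Prop :=
  ∀ (z : Lat d) (a : I2 n), Integrable (fun Y : Conf d n => comp2 n (Y z) a) μ ∧
    ∫ Y : Conf d n, comp2 n (Y z) a ∂μ = 0

/-- Second moments exist. -/
def FinVar (μ : Measure (Conf d n)) : Prop :=
  ∀ (z z' : Lat d) (a b : I2 n),
    Integrable (fun Y : Conf d n => comp2 n (Y z) a * comp2 n (Y z') b) μ

/-- Condition S3: finite variance and mean energy density bounded by `e₀`. -/
def CondS3 (μ : Measure (Conf d n)) (e₀ : ℝ) : Prop :=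
  FinVar d n μ ∧ ∀ z : Lat d, ∑ a : I2 n, Qmat d n μ z z a a ≤ e₀

/-- Translation of a configuration. -/
def shift (h : Lat d) (Y : Conf d n) : Conf d n := fun z => Y (z - h)

/-- Condition S2: the correlations have the form `q₀(z₁,z₁',z̄−z̄')`, vanish at
the boundary, and converge as `z₁, z₁' → +∞` to correlations `𝐪₀(z−z')` of a
translation-invariant zero-mean measure on `H_α`. -/
def CondS2 (α : ℝ) (μ : Measure (Conf d n)) (q0 : Lat d → Matrix (I2 n) (I2 n) ℝ) : Prop :=
  (∀ z z' w w' : Lat d, z 0 = w 0 → z' 0 = w' 0 →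
      (∀ i : Fin d, i ≠ 0 → z i - z' i = w i - w' i) →
      Qmat d n μ z z' = Qmat d n μ w w') ∧
  (∀ z z' : Lat d, z 0 = 0 ∨ z' 0 = 0 → Qmat d n μ z z' = 0) ∧
  (∀ z : Lat d, Tendsto (fun y : ℕ =>
      Qmat d n μ (Function.update z 0 (z 0 + y)) (fun i => if i = 0 then (y:ℤ) else 0))
      atTop (𝓝 (q0 z))) ∧
  (∃ ν : Measure (Conf d n), IsProbabilityMeasure ν ∧
     (∀ h : Lat d, ν.map (shift d n h) = ν) ∧
     CondS1 d n ν ∧ FinVar d n ν ∧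
     (∀ z z' : Lat d, Qmat d n ν z z' = q0 (z - z')) ∧
     ν {X : Conf d n | MemH d n α X} = 1)

/-- The σ-algebra generated by the values `Y(z)`, `z ∈ A`. -/
def cylSig (A : Set (Lat d)) : MeasurableSpace (Conf d n) :=
  MeasurableSpace.comap (fun (Y : Conf d n) (z : A) => Y z.1) inferInstance

/-- The Ibragimov mixing coefficient `φ(r)` of `μ`. -/
def phiMix (μ : Measure (Conf d n)) (r : ℝ) : ℝ :=
  sSup {x : ℝ | ∃ A B : Set (Lat d), (∀ a ∈ A, 0 < a 0) ∧ (∀ b ∈ B, 0 < b 0) ∧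
    (∀ a ∈ A, ∀ b ∈ B, r ≤ znorm d (a - b)) ∧
    ∃ SA SB : Set (Conf d n),
      MeasurableSet[cylSig d n A] SA ∧ MeasurableSet[cylSig d n B] SB ∧
      0 < μ SB ∧
      x = |(μ (SA ∩ SB)).toReal - (μ SA).toReal * (μ SB).toReal| / (μ SB).toReal}

/-- Condition S4: strong uniform Ibragimov mixing together with the
integrability `∫₀^∞ r^{d−1} φ^{1/2}(r) dr < ∞`. -/
def CondS4 (μ : Measure (Conf d n)) : Prop :=
  Tendsto (phiMix d n μ) atTop (𝓝 0) ∧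
  IntegrableOn (fun r : ℝ => r ^ (d - 1) * Real.sqrt (phiMix d n μ r)) (Set.Ioi 0)

/-- `μ` is a Borel probability measure on `H_{α,+}`. -/
def ProbHP (α : ℝ) (μ : Measure (Conf d n)) : Prop :=
  IsProbabilityMeasure μ ∧ μ {Y : Conf d n | PlusSupp d n Y ∧ MemHP d n α Y} = 1

/-- The set on which the measures are concentrated. -/
def suppSet (α : ℝ) : Set (Conf d n) := {Y : Conf d n | PlusSupp d n Y ∧ MemHP d n α Y}

/-- Bounded functionals on `H_{α,+}`, continuous with respect to the norm of `H_{α,+}`. -/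
def BCtest (α : ℝ) (f : Conf d n → ℝ) : Prop :=
  (∃ M : ℝ, ∀ Y, |f Y| ≤ M) ∧
  (∀ Y ∈ suppSet d n α, ∀ ε > (0:ℝ), ∃ δ > (0:ℝ), ∀ Y' ∈ suppSet d n α,
     normSqHP d n α (Y' - Y) < δ → |f Y' - f Y| < ε)

/-- `⟨v,w⟩` in `ℝ^n × ℝ^n`. -/
def dot2 (v w : Pt n) : ℝ := (∑ a, v.1 a * w.1 a) + (∑ a, v.2 a * w.2 a)

/-- The pairing `⟨Y,Ψ⟩₊ = ∑_{z∈ℤ^d_+} Y(z)·Ψ(z)`. -/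
def pairP (Y Ψ : Conf d n) : ℝ := ∑' z : LatP d, dot2 n (Y z.1) (Ψ z.1)

/-- A measure is Gaussian if all its finite-dimensional linear images are Gaussian. -/
def IsGaussianOn (μ : Measure (Conf d n)) : Prop :=
  ∀ Ψ : Conf d n, {z : Lat d | Ψ z ≠ 0}.Finite →
    ∃ (m : ℝ) (v : NNReal),
      μ.map (fun Y : Conf d n => pairP d n Y Ψ) = ProbabilityTheory.gaussianReal m v

/-- Partial derivative `∂_{θ_i}`. -/
def pder (i : Fin d) (f : (Fin d → ℝ) → ℝ) (θ : Fin d → ℝ) : ℝ :=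
  fderiv ℝ f θ (Pi.single i 1)

/-- Hessian matrix of second partial derivatives. -/
def hess (f : (Fin d → ℝ) → ℝ) (θ : Fin d → ℝ) : Matrix (Fin d) (Fin d) ℝ :=
  Matrix.of fun i j => pder d i (fun x => pder d j f x) θ

variable (s : ℕ)

/-- The data `(ω_σ, Π_σ, 𝓒_*)` is a spectral decomposition of `Ω(θ) = V̂(θ)^{1/2}`
as in Lemma 2.2: `𝓒_*` is a closed Lebesgue-null set; off `𝓒_*` the band functions
`ω_σ` and spectral projections `Π_σ` are real-analytic, `Π_σ` are orthogonal
projections of constant rank, `ω_1 < … < ω_s` are nonnegative, and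
`Ω = ∑ ω_σ Π_σ`. -/
def SpecHyp (h : CondE3 d n V) (ω : Fin s → (Fin d → ℝ) → ℝ)
    (P : Fin s → (Fin d → ℝ) → Matrix (Fin n) (Fin n) ℂ)
    (Cs : Set (Fin d → ℝ)) : Prop :=
  IsClosed Cs ∧ MeasureTheory.volume Cs = 0 ∧ s ≤ n ∧
  ∀ θ : Fin d → ℝ, θ ∉ Cs →
    (OmegaM d n V h θ = ∑ σ : Fin s, (ω σ θ : ℂ) • P σ θ) ∧
    (∀ σ, (P σ θ).IsHermitian) ∧
    (∀ σ τ : Fin s, P σ θ * P τ θ = if σ = τ then P σ θ else 0) ∧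
    (∑ σ : Fin s, P σ θ) = 1 ∧
    (∀ σ τ : Fin s, σ < τ → ω σ θ < ω τ θ) ∧ (∀ σ, 0 ≤ ω σ θ) ∧
    (∀ σ, AnalyticAt ℝ (ω σ) θ) ∧
    (∀ σ (k l : Fin n), AnalyticAt ℝ (fun θ' => P σ θ' k l) θ) ∧
    (∀ σ, ∀ θ' ∉ Cs, (P σ θ).trace = (P σ θ').trace)

/-- Condition E4: `det Hess(ω_σ)` does not vanish identically outside `𝓒_*`. -/
def CondE4 (ω : Fin s → (Fin d → ℝ) → ℝ) (Cs : Set (Fin d → ℝ)) : Prop :=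
  ∀ σ : Fin s, ∃ θ, θ ∉ Cs ∧ (hess d (ω σ) θ).det ≠ 0

/-- Condition E5: no identity `ω_σ ± ω_{σ'} ≡ const ≠ 0` on `𝕋^d∖𝓒_*`. -/
def CondE5 (ω : Fin s → (Fin d → ℝ) → ℝ) (Cs : Set (Fin d → ℝ)) : Prop :=
  ∀ σ τ : Fin s, σ ≠ τ → ∀ c : ℝ, c ≠ 0 →
    (∃ θ, θ ∉ Cs ∧ ω σ θ + ω τ θ ≠ c) ∧ (∃ θ, θ ∉ Cs ∧ ω σ θ - ω τ θ ≠ c)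

/-- Condition E6: `‖V̂(θ)^{-1}‖ ∈ L¹(𝕋^d)`. -/
def CondE6 : Prop := IntegrableOn (fun θ => mnormC ((Vhat d n V θ)⁻¹)) (box d)

/-- The matrix `C(θ) = [[0, Ω(θ)^{-1}], [−Ω(θ), 0]]`. -/
def Cmat (h : CondE3 d n V) (θ : Fin d → ℝ) : Matrix (I2 n) (I2 n) ℂ :=
  Matrix.fromBlocks 0 (OmegaM d n V h θ)⁻¹ (-(OmegaM d n V h θ)) 0

/-- The block-diagonal projection `diag(Π_σ(θ), Π_σ(θ))` acting on `2n`-vectors. -/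
def P2 (P : Fin s → (Fin d → ℝ) → Matrix (Fin n) (Fin n) ℂ) (σ : Fin s)
    (θ : Fin d → ℝ) : Matrix (I2 n) (I2 n) ℂ :=
  Matrix.fromBlocks (P σ θ) 0 0 (P σ θ)

/-- Fourier transform of a matrix-valued function on the lattice. -/
def fourierM (q : Lat d → Matrix (I2 n) (I2 n) ℝ) (θ : Fin d → ℝ) :
    Matrix (I2 n) (I2 n) ℂ :=
  Matrix.of fun a b =>
    ∑' z : Lat d, Complex.exp (Complex.I * (zdot d z θ : ℂ)) * ((q z a b : ℝ) : ℂ)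

/-- The formula `q̂_∞^+(θ)` of (1.14). -/
def qhatP (h : CondE3 d n V) (P : Fin s → (Fin d → ℝ) → Matrix (Fin n) (Fin n) ℂ)
    (q0 : Lat d → Matrix (I2 n) (I2 n) ℝ) (θ : Fin d → ℝ) : Matrix (I2 n) (I2 n) ℂ :=
  (4:ℂ)⁻¹ • ∑ σ : Fin s, P2 d n s P σ θ *
    (fourierM d n q0 θ + Cmat d n V h θ * fourierM d n q0 θ * (Cmat d n V h θ)ᴴ) *
    P2 d n s P σ θ

/-- The formula `q̂_∞^−(θ)` of (1.15). -/
def qhatM (h : CondE3 d n V) (ω : Fin s → (Fin d → ℝ) → ℝ)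
    (P : Fin s → (Fin d → ℝ) → Matrix (Fin n) (Fin n) ℂ)
    (q0 : Lat d → Matrix (I2 n) (I2 n) ℝ) (θ : Fin d → ℝ) : Matrix (I2 n) (I2 n) ℂ :=
  (Complex.I / 4) • ∑ σ : Fin s, ((Real.sign (pder d 0 (ω σ) θ) : ℝ) : ℂ) •
    (P2 d n s P σ θ *
      (Cmat d n V h θ * fourierM d n q0 θ - fourierM d n q0 θ * (Cmat d n V h θ)ᴴ) *
      P2 d n s P σ θ)

/-- The combination (1.13):
`Q_∞(z,z') = q_∞(z−z') − q_∞(z−z̃') − q_∞(z̃−z') + q_∞(z̃−z̃')`. -/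
def Qcomb (q : Lat d → Matrix (I2 n) (I2 n) ℂ) (z z' : Lat d) :
    Matrix (I2 n) (I2 n) ℂ :=
  q (z - z') - q (z - til d z') - q (til d z - z') + q (til d z - til d z')


/-- Fourier transform of a complex-matrix-valued function on the lattice. -/
def fourierMC (q : Lat d → Matrix (I2 n) (I2 n) ℂ) (θ : Fin d → ℝ) :
    Matrix (I2 n) (I2 n) ℂ :=
  Matrix.of fun a b =>
    ∑' z : Lat d, Complex.exp (Complex.I * (zdot d z θ : ℂ)) * q z a b

/-- Rapidly decreasing sequences on `ℤ^d` (the space `S(ℤ^d) ⊗ ℝ^n` squared). -/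
def Rapid (Ψ : Conf d n) : Prop :=
  ∀ p : ℕ, ∃ C : ℝ, ∀ z : Lat d,
    Real.sqrt (vsq n (Ψ z)) ≤ C * (1 + znorm d z) ^ (-(p:ℝ))

/-- Fourier transform `Ψ̂(θ)` of a configuration. -/
def PsiHat (Ψ : Conf d n) (θ : Fin d → ℝ) : I2 n → ℂ := fun a =>
  ∑' z : Lat d, Complex.exp (Complex.I * (zdot d z θ : ℂ)) * ((comp2 n (Ψ z) a : ℝ) : ℂ)

/-- The critical set `𝓒 = 𝓒₀ ∪ 𝓒_* ∪ (∪_σ 𝓒_σ)`. -/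
def critSet (ω : Fin s → (Fin d → ℝ) → ℝ) (Cs : Set (Fin d → ℝ)) : Set (Fin d → ℝ) :=
  Cs ∪ {θ | (Vhat d n V θ).det = 0} ∪
    ⋃ σ : Fin s, {θ | θ ∉ Cs ∧ (hess d (ω σ) θ).det = 0}

/-- `Ψ ∈ 𝓢⁰`: rapidly decreasing with `Ψ̂` vanishing in a neighborhood of `𝓒`. -/
def SZero (ω : Fin s → (Fin d → ℝ) → ℝ) (Cs : Set (Fin d → ℝ)) (Ψ : Conf d n) : Prop :=
  Rapid d n Ψ ∧ ∃ U : Set (Fin d → ℝ), IsOpen U ∧ critSet d n V s ω Cs ⊆ U ∧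
    ∀ θ ∈ U, PsiHat d n Ψ θ = 0

/-- Euclidean norm of a `2n`-dimensional complex vector. -/
def vnormC (v : I2 n → ℂ) : ℝ := Real.sqrt (∑ a, ‖v a‖^2)

/-- `Φ(z,t) = (2π)^{-d} ∫_{𝕋^d} e^{−iz·θ} Ĝ_t^*(θ) Ψ̂(θ) dθ`. -/
def PhiC (Ψ : Conf d n) (z : Lat d) (t : ℝ) : I2 n → ℂ := fun a =>
  (((2*Real.pi)^d : ℝ) : ℂ)⁻¹ *
    ∫ θ in box d, Complex.exp (-(Complex.I) * (zdot d z θ : ℂ)) *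
      (((NormedSpace.exp (t • Ahat d n V θ))ᴴ).mulVec (PsiHat d n Ψ θ) a)

/-- `Φ(z',t) = U₊'(t)Ψ(z') = ∑_z G_t^T(z−z') Ψ(z)`. -/
def PhiR (Ψ : Conf d n) (t : ℝ) : Conf d n := fun z' =>
  ∑' z : Lat d, mul2 n ((GreenR d n V t (z - z'))ᵀ) (Ψ z)

/-- `R_t^a(z,z') = ∑_{y,y'} G_t(z−y) Q^a(y,y') G_t^T(z'−y')`. -/
def RtA (Q : Lat d → Lat d → Matrix (I2 n) (I2 n) ℝ) (t : ℝ) (z z' : Lat d) :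
    Matrix (I2 n) (I2 n) ℝ :=
  Matrix.of fun a b => ∑' p : Lat d × Lat d,
    (GreenR d n V t (z - p.1) * Q p.1 p.2 * (GreenR d n V t (z' - p.2))ᵀ) a b

/-- `Q_*(z,z')`: the initial covariance, extended by zero outside `ℤ^d_+ × ℤ^d_+`. -/
def Qstar (μ : Measure (Conf d n)) (y y' : Lat d) : Matrix (I2 n) (I2 n) ℝ :=
  if 0 < y 0 ∧ 0 < y' 0 then Qmat d n μ y y' else 0

/-- `Q^+(y,y') = (1/2) 𝐪₀(y−y')`. -/
def Qplus (q0 : Lat d → Matrix (I2 n) (I2 n) ℝ) (y y' : Lat d) :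
    Matrix (I2 n) (I2 n) ℝ := ((2:ℝ)⁻¹) • q0 (y - y')

/-- `Q^−(y,y') = (1/2) 𝐪₀(y−y') sign(y'_1)`. -/
def Qminus (q0 : Lat d → Matrix (I2 n) (I2 n) ℝ) (y y' : Lat d) :
    Matrix (I2 n) (I2 n) ℝ := ((((y' 0).sign : ℤ) : ℝ) * (2:ℝ)⁻¹) • q0 (y - y')

/-- `Q^r = Q_* − Q^+ − Q^−`. -/
def Qrem (μ : Measure (Conf d n)) (q0 : Lat d → Matrix (I2 n) (I2 n) ℝ)
    (y y' : Lat d) : Matrix (I2 n) (I2 n) ℝ :=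
  Qstar d n μ y y' - Qplus d n q0 y y' - Qminus d n q0 y y'

/-- `⟨Y, 1_S Φ⟩₊`: pairing restricted to a sublattice `S`. -/
def rvOn (S : Set (Lat d)) (Φ Y : Conf d n) : ℝ :=
  ∑' z : LatP d, Set.indicator S (fun w => dot2 n (Y w) (Φ w)) z.1

end HCryst


open HCryst

namespace MixAux
variable {Ω : Type*} {M N m0 : MeasurableSpace Ω} (μ : Measure Ω)

/-- signed correlation of two events, real-valued -/
noncomputable def cR (S T : Set Ω) : ℝ :=
  (μ (S ∩ T)).toReal - (μ S).toReal * (μ T).toReal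

variable [IsProbabilityMeasure μ]

lemma cR_add_union {κ : Type*} (hN : N ≤ m0) {S : Set Ω} (hS : MeasurableSet[m0] S)
    (J : Finset κ) (B : κ → Set Ω) (hB : ∀ j ∈ J, MeasurableSet[N] (B j))
    (hdisj : (J : Set κ).PairwiseDisjoint B) :
    ∑ j ∈ J, cR μ S (B j) = cR μ S (⋃ j ∈ J, B j) := by
  have hBm : ∀ j ∈ J, MeasurableSet[m0] (B j) := fun j hj => hN _ (hB j hj)
  have h1 : μ (⋃ j ∈ J, B j) = ∑ j ∈ J, μ (B j) :=
    measure_biUnion_finset hdisj hBm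
  have h2 : μ (S ∩ ⋃ j ∈ J, B j) = ∑ j ∈ J, μ (S ∩ B j) := by
    rw [Set.inter_iUnion₂]
    exact measure_biUnion_finset
      (fun x hx y hy hxy => (hdisj hx hy hxy).mono Set.inter_subset_right Set.inter_subset_right)
      (fun j hj => hS.inter (hBm j hj))
  simp only [cR, h1, h2, ENNReal.toReal_sum (fun j _ => measure_ne_top μ _),
    Finset.sum_sub_distrib, Finset.mul_sum]

lemma row_sum_le {κ : Type*} (hM : M ≤ m0) (hN : N ≤ m0) {φ : ℝ}
    (hmix : ∀ S T : Set Ω, MeasurableSet[M] S → MeasurableSet[N] T →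
      |cR μ S T| ≤ φ * (μ S).toReal)
    {S : Set Ω} (hS : MeasurableSet[M] S)
    (J : Finset κ) (B : κ → Set Ω) (hB : ∀ j ∈ J, MeasurableSet[N] (B j))
    (hdisj : (J : Set κ).PairwiseDisjoint B) :
    ∑ j ∈ J, |cR μ S (B j)| ≤ 2 * (φ * (μ S).toReal) := by
  classical
  have hSm : MeasurableSet[m0] S := hM _ hS
  set J1 := J.filter (fun j => 0 ≤ cR μ S (B j)) with hJ1
  set J2 := J.filter (fun j => ¬ 0 ≤ cR μ S (B j)) with hJ2
  have hsplit : ∑ j ∈ J, |cR μ S (B j)| =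
      (∑ j ∈ J1, cR μ S (B j)) + (∑ j ∈ J2, -(cR μ S (B j))) := by
    rw [← Finset.sum_filter_add_sum_filter_not J (fun j => 0 ≤ cR μ S (B j))
      (fun j => |cR μ S (B j)|)]
    congr 1
    · exact Finset.sum_congr rfl (fun j hj => abs_of_nonneg (Finset.mem_filter.mp hj).2)
    · exact Finset.sum_congr rfl (fun j hj =>
        abs_of_neg (lt_of_not_ge (Finset.mem_filter.mp hj).2))
  have key : ∀ J' : Finset κ, J' ⊆ J → |∑ j ∈ J', cR μ S (B j)| ≤ φ * (μ S).toReal := by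
    intro J' hJ'
    rw [cR_add_union μ hN hSm J' B (fun j hj => hB j (hJ' hj))
      (hdisj.subset (Finset.coe_subset.mpr hJ'))]
    exact hmix _ _ hS (MeasurableSet.biUnion J'.countable_toSet (fun j hj => hB j (hJ' hj)))
  have h1 := key J1 (Finset.filter_subset _ _)
  have h2 := key J2 (Finset.filter_subset _ _)
  have hneg : ∑ j ∈ J2, -cR μ S (B j) = -(∑ j ∈ J2, cR μ S (B j)) := by
    rw [Finset.sum_neg_distrib]
  rw [hsplit, hneg, two_mul]
  exact add_le_add ((le_abs_self _).trans h1) ((neg_le_abs _).trans h2)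


lemma col_sum_le {ι : Type*}
    (I : Finset ι) (A : ι → Set Ω) (hA : ∀ i ∈ I, MeasurableSet[m0] (A i))
    (hdisj : (I : Set ι).PairwiseDisjoint A) (hcov : ⋃ i ∈ I, A i = Set.univ)
    {T : Set Ω} (hT : MeasurableSet[m0] T) :
    ∑ i ∈ I, |cR μ (A i) T| ≤ 2 * (μ T).toReal := by
  have hsum1 : ∑ i ∈ I, (μ (A i ∩ T)).toReal = (μ T).toReal := by
    have : μ (⋃ i ∈ I, A i ∩ T) = ∑ i ∈ I, μ (A i ∩ T) :=
      measure_biUnion_finset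
        (fun x hx y hy hxy => (hdisj hx hy hxy).mono Set.inter_subset_left Set.inter_subset_left)
        (fun i hi => (hA i hi).inter hT)
    have hU : (⋃ i ∈ I, A i ∩ T) = T := by
      rw [← Set.iUnion₂_inter, hcov, Set.univ_inter]
    rw [hU] at this
    rw [← ENNReal.toReal_sum (fun i _ => measure_ne_top μ _), ← this]
  have hsum2 : ∑ i ∈ I, (μ (A i)).toReal = 1 := by
    have : μ (⋃ i ∈ I, A i) = ∑ i ∈ I, μ (A i) := measure_biUnion_finset hdisj hA
    rw [hcov] at this
    rw [← ENNReal.toReal_sum (fun i _ => measure_ne_top μ _), ← this, measure_univ,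
      ENNReal.toReal_one]
  calc ∑ i ∈ I, |cR μ (A i) T|
      ≤ ∑ i ∈ I, ((μ (A i ∩ T)).toReal + (μ (A i)).toReal * (μ T).toReal) := by
        refine Finset.sum_le_sum (fun i _ => ?_)
        have h1 : (0:ℝ) ≤ (μ (A i ∩ T)).toReal := ENNReal.toReal_nonneg
        have h2 : (0:ℝ) ≤ (μ (A i)).toReal * (μ T).toReal :=
          mul_nonneg ENNReal.toReal_nonneg ENNReal.toReal_nonneg
        rw [cR, abs_sub_le_iff]
        constructor <;> linarith
    _ = 2 * (μ T).toReal := by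
        rw [Finset.sum_add_distrib, hsum1, ← Finset.sum_mul, hsum2, one_mul, two_mul]

lemma cov_fin {ι κ : Type*} (hM : M ≤ m0) (hN : N ≤ m0) {φ : ℝ} (hφ : 0 ≤ φ)
    (hmix : ∀ S T : Set Ω, MeasurableSet[M] S → MeasurableSet[N] T →
      |cR μ S T| ≤ φ * (μ S).toReal)
    (I : Finset ι) (J : Finset κ) (A : ι → Set Ω) (B : κ → Set Ω) (a : ι → ℝ) (b : κ → ℝ)
    (hA : ∀ i ∈ I, MeasurableSet[M] (A i)) (hAd : (I : Set ι).PairwiseDisjoint A)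
    (hAc : ⋃ i ∈ I, A i = Set.univ)
    (hB : ∀ j ∈ J, MeasurableSet[N] (B j)) (hBd : (J : Set κ).PairwiseDisjoint B)
    (hBc : ⋃ j ∈ J, B j = Set.univ) :
    |∑ i ∈ I, ∑ j ∈ J, a i * b j * cR μ (A i) (B j)| ≤
      2 * Real.sqrt φ *
        (Real.sqrt (∑ i ∈ I, (a i)^2 * (μ (A i)).toReal) *
         Real.sqrt (∑ j ∈ J, (b j)^2 * (μ (B j)).toReal)) := by
  classical
  set Sa := ∑ i ∈ I, (a i)^2 * (μ (A i)).toReal with hSa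
  set Sb := ∑ j ∈ J, (b j)^2 * (μ (B j)).toReal with hSb
  have hSa0 : 0 ≤ Sa := Finset.sum_nonneg fun i _ => mul_nonneg (sq_nonneg _) ENNReal.toReal_nonneg
  have hSb0 : 0 ≤ Sb := Finset.sum_nonneg fun j _ => mul_nonneg (sq_nonneg _) ENNReal.toReal_nonneg
  set P := I ×ˢ J with hP
  set F : ι × κ → ℝ := fun p => |a p.1| * Real.sqrt |cR μ (A p.1) (B p.2)| with hF
  set G : ι × κ → ℝ := fun p => |b p.2| * Real.sqrt |cR μ (A p.1) (B p.2)| with hG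
  have habs : |∑ i ∈ I, ∑ j ∈ J, a i * b j * cR μ (A i) (B j)| ≤ ∑ p ∈ P, F p * G p := by
    rw [← Finset.sum_product']
    refine (Finset.abs_sum_le_sum_abs _ _).trans (le_of_eq (Finset.sum_congr rfl ?_))
    intro p _
    rw [hF, hG, abs_mul, abs_mul,
      ← Real.mul_self_sqrt (abs_nonneg (cR μ (A p.1) (B p.2)))]
    ring
  have hFsq : ∑ p ∈ P, (F p)^2 ≤ 2 * (φ * Sa) := by
    have : ∑ p ∈ P, (F p)^2 = ∑ i ∈ I, (a i)^2 * ∑ j ∈ J, |cR μ (A i) (B j)| := by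
      rw [hP, Finset.sum_product]
      refine Finset.sum_congr rfl fun i _ => ?_
      rw [Finset.mul_sum]
      refine Finset.sum_congr rfl fun j _ => ?_
      rw [hF, mul_pow, sq_abs, Real.sq_sqrt (abs_nonneg _)]
    rw [this, hSa, Finset.mul_sum]
    rw [Finset.mul_sum]
    refine Finset.sum_le_sum fun i hi => ?_
    have hrow := row_sum_le μ hM hN hmix (hA i hi) J B hB hBd
    calc (a i)^2 * ∑ j ∈ J, |cR μ (A i) (B j)| ≤ (a i)^2 * (2 * (φ * (μ (A i)).toReal)) :=
          mul_le_mul_of_nonneg_left hrow (sq_nonneg _)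
      _ = 2 * (φ * ((a i)^2 * (μ (A i)).toReal)) := by ring
  have hGsq : ∑ p ∈ P, (G p)^2 ≤ 2 * Sb := by
    have : ∑ p ∈ P, (G p)^2 = ∑ j ∈ J, (b j)^2 * ∑ i ∈ I, |cR μ (A i) (B j)| := by
      rw [hP, Finset.sum_product_right]
      refine Finset.sum_congr rfl fun j _ => ?_
      rw [Finset.mul_sum]
      refine Finset.sum_congr rfl fun i _ => ?_
      rw [hG, mul_pow, sq_abs, Real.sq_sqrt (abs_nonneg _)]
    rw [this, hSb, Finset.mul_sum]
    refine Finset.sum_le_sum fun j hj => ?_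
    have hcol := col_sum_le μ I A (fun i hi => hM _ (hA i hi)) hAd hAc (hN _ (hB j hj))
    calc (b j)^2 * ∑ i ∈ I, |cR μ (A i) (B j)| ≤ (b j)^2 * (2 * (μ (B j)).toReal) :=
          mul_le_mul_of_nonneg_left hcol (sq_nonneg _)
      _ = 2 * ((b j)^2 * (μ (B j)).toReal) := by ring
  have hFG0 : 0 ≤ ∑ p ∈ P, F p * G p :=
    Finset.sum_nonneg fun p _ => mul_nonneg
      (mul_nonneg (abs_nonneg _) (Real.sqrt_nonneg _))
      (mul_nonneg (abs_nonneg _) (Real.sqrt_nonneg _))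
  have hCS : (∑ p ∈ P, F p * G p)^2 ≤ (2 * (φ * Sa)) * (2 * Sb) := by
    refine (Finset.sum_mul_sq_le_sq_mul_sq P F G).trans ?_
    have h1 : (0:ℝ) ≤ ∑ p ∈ P, (G p)^2 := Finset.sum_nonneg fun p _ => sq_nonneg _
    have h2 : (0:ℝ) ≤ 2 * (φ * Sa) := by positivity
    exact mul_le_mul hFsq hGsq h1 h2
  have hbound : ∑ p ∈ P, F p * G p ≤
      2 * Real.sqrt φ * (Real.sqrt Sa * Real.sqrt Sb) := by
    have heq : (2 * Real.sqrt φ * (Real.sqrt Sa * Real.sqrt Sb))^2 = (2 * (φ * Sa)) * (2 * Sb) := by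
      have e1 : Real.sqrt φ ^ 2 = φ := Real.sq_sqrt hφ
      have e2 : Real.sqrt Sa ^ 2 = Sa := Real.sq_sqrt hSa0
      have e3 : Real.sqrt Sb ^ 2 = Sb := Real.sq_sqrt hSb0
      calc (2 * Real.sqrt φ * (Real.sqrt Sa * Real.sqrt Sb))^2
          = 4 * Real.sqrt φ ^ 2 * Real.sqrt Sa ^ 2 * Real.sqrt Sb ^ 2 := by ring
        _ = (2 * (φ * Sa)) * (2 * Sb) := by rw [e1, e2, e3]; ring
    have h0 : (0:ℝ) ≤ 2 * Real.sqrt φ * (Real.sqrt Sa * Real.sqrt Sb) := by positivity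
    calc ∑ p ∈ P, F p * G p = Real.sqrt ((∑ p ∈ P, F p * G p)^2) := (Real.sqrt_sq hFG0).symm
      _ ≤ Real.sqrt ((2 * (φ * Sa)) * (2 * Sb)) := Real.sqrt_le_sqrt hCS
      _ = Real.sqrt ((2 * Real.sqrt φ * (Real.sqrt Sa * Real.sqrt Sb))^2) := by rw [heq]
      _ = 2 * Real.sqrt φ * (Real.sqrt Sa * Real.sqrt Sb) := Real.sqrt_sq h0
  exact habs.trans hbound


lemma fiber_expand {X : Ω → ℝ} {R : Finset ℝ} (hR : ∀ ω, X ω ∈ R) (f : ℝ → ℝ) (ω : Ω) :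
    f (X ω) = ∑ v ∈ R, Set.indicator (X ⁻¹' {v}) (fun _ => f v) ω := by
  rw [Finset.sum_eq_single_of_mem (X ω) (hR ω)]
  · simp [Set.indicator]
  · intro b _ hb
    simp only [Set.indicator, Set.mem_preimage, Set.mem_singleton_iff]
    rw [if_neg (fun h => hb h.symm)]

lemma fiber_expand2 {X Y : Ω → ℝ} {RX RY : Finset ℝ}
    (hRX : ∀ ω, X ω ∈ RX) (hRY : ∀ ω, Y ω ∈ RY) (ω : Ω) :
    X ω * Y ω = ∑ v ∈ RX, ∑ w ∈ RY,
      Set.indicator (X ⁻¹' {v} ∩ Y ⁻¹' {w}) (fun _ => v * w) ω := by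
  rw [Finset.sum_eq_single_of_mem (X ω) (hRX ω)]
  · rw [Finset.sum_eq_single_of_mem (Y ω) (hRY ω)]
    · simp [Set.indicator]
    · intro b _ hb
      simp only [Set.indicator, Set.mem_inter_iff, Set.mem_preimage, Set.mem_singleton_iff]
      rw [if_neg (fun h => hb h.2.symm)]
  · intro b _ hb
    refine Finset.sum_eq_zero fun w _ => ?_
    simp only [Set.indicator, Set.mem_inter_iff, Set.mem_preimage, Set.mem_singleton_iff]
    rw [if_neg (fun h => hb h.1.symm)]

open MeasureTheory in
lemma integral_fiber [IsFiniteMeasure μ] {X : Ω → ℝ} {R : Finset ℝ} (hR : ∀ ω, X ω ∈ R)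
    (hfib : ∀ v : ℝ, MeasurableSet[m0] (X ⁻¹' {v})) (f : ℝ → ℝ) :
    ∫ ω, f (X ω) ∂μ = ∑ v ∈ R, f v * (μ (X ⁻¹' {v})).toReal := by
  calc ∫ ω, f (X ω) ∂μ
      = ∫ ω, ∑ v ∈ R, Set.indicator (X ⁻¹' {v}) (fun _ => f v) ω ∂μ := by
        congr 1; funext ω; exact fiber_expand hR f ω
    _ = ∑ v ∈ R, ∫ ω, Set.indicator (X ⁻¹' {v}) (fun _ => f v) ω ∂μ :=
        integral_finset_sum _ (fun v _ => (integrable_const (f v)).indicator (hfib v))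
    _ = ∑ v ∈ R, f v * (μ (X ⁻¹' {v})).toReal := by
        refine Finset.sum_congr rfl fun v _ => ?_
        rw [integral_indicator_const (f v) (hfib v), smul_eq_mul, mul_comm, measureReal_def]

open MeasureTheory in
lemma integral_fiber2 [IsFiniteMeasure μ] {X Y : Ω → ℝ} {RX RY : Finset ℝ}
    (hRX : ∀ ω, X ω ∈ RX) (hRY : ∀ ω, Y ω ∈ RY)
    (hfib : ∀ v w : ℝ, MeasurableSet[m0] (X ⁻¹' {v} ∩ Y ⁻¹' {w})) :
    ∫ ω, X ω * Y ω ∂μ = ∑ v ∈ RX, ∑ w ∈ RY,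
      v * w * (μ (X ⁻¹' {v} ∩ Y ⁻¹' {w})).toReal := by
  calc ∫ ω, X ω * Y ω ∂μ
      = ∫ ω, ∑ v ∈ RX, ∑ w ∈ RY,
          Set.indicator (X ⁻¹' {v} ∩ Y ⁻¹' {w}) (fun _ => v * w) ω ∂μ := by
        congr 1; funext ω; exact fiber_expand2 hRX hRY ω
    _ = ∑ v ∈ RX, ∫ ω, ∑ w ∈ RY,
          Set.indicator (X ⁻¹' {v} ∩ Y ⁻¹' {w}) (fun _ => v * w) ω ∂μ :=
        integral_finset_sum _ (fun v _ => integrable_finset_sum _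
          (fun w _ => (integrable_const (v * w)).indicator (hfib v w)))
    _ = ∑ v ∈ RX, ∑ w ∈ RY, v * w * (μ (X ⁻¹' {v} ∩ Y ⁻¹' {w})).toReal := by
        refine Finset.sum_congr rfl fun v _ => ?_
        rw [integral_finset_sum _ (fun w _ => (integrable_const (v * w)).indicator (hfib v w))]
        refine Finset.sum_congr rfl fun w _ => ?_
        rw [integral_indicator_const (v * w) (hfib v w), smul_eq_mul, mul_comm, measureReal_def]

open MeasureTheory in
lemma cov_finite_range [IsProbabilityMeasure μ] (hM : M ≤ m0) (hN : N ≤ m0)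
    {φ : ℝ} (hφ : 0 ≤ φ)
    (hmix : ∀ S T : Set Ω, MeasurableSet[M] S → MeasurableSet[N] T →
      |cR μ S T| ≤ φ * (μ S).toReal)
    {X Y : Ω → ℝ} {RX RY : Finset ℝ} (hRX : ∀ ω, X ω ∈ RX) (hRY : ∀ ω, Y ω ∈ RY)
    (hXfib : ∀ v : ℝ, MeasurableSet[M] (X ⁻¹' {v}))
    (hYfib : ∀ w : ℝ, MeasurableSet[N] (Y ⁻¹' {w})) :
    |∫ ω, X ω * Y ω ∂μ - (∫ ω, X ω ∂μ) * ∫ ω, Y ω ∂μ| ≤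
      2 * Real.sqrt φ * (Real.sqrt (∫ ω, X ω ^ 2 ∂μ) * Real.sqrt (∫ ω, Y ω ^ 2 ∂μ)) := by
  have hXm : ∀ v : ℝ, MeasurableSet[m0] (X ⁻¹' {v}) := fun v => hM _ (hXfib v)
  have hYm : ∀ w : ℝ, MeasurableSet[m0] (Y ⁻¹' {w}) := fun w => hN _ (hYfib w)
  have hIX : ∫ ω, X ω ∂μ = ∑ v ∈ RX, v * (μ (X ⁻¹' {v})).toReal :=
    integral_fiber μ hRX hXm id
  have hIY : ∫ ω, Y ω ∂μ = ∑ w ∈ RY, w * (μ (Y ⁻¹' {w})).toReal :=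
    integral_fiber μ hRY hYm id
  have hIX2 : ∫ ω, X ω ^ 2 ∂μ = ∑ v ∈ RX, v ^ 2 * (μ (X ⁻¹' {v})).toReal :=
    integral_fiber μ hRX hXm (fun x => x ^ 2)
  have hIY2 : ∫ ω, Y ω ^ 2 ∂μ = ∑ w ∈ RY, w ^ 2 * (μ (Y ⁻¹' {w})).toReal :=
    integral_fiber μ hRY hYm (fun x => x ^ 2)
  have hmain : ∫ ω, X ω * Y ω ∂μ - (∫ ω, X ω ∂μ) * ∫ ω, Y ω ∂μ =
      ∑ v ∈ RX, ∑ w ∈ RY, v * w * cR μ (X ⁻¹' {v}) (Y ⁻¹' {w}) := by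
    rw [integral_fiber2 μ hRX hRY (fun v w => (hXm v).inter (hYm w)), hIX, hIY,
      Finset.sum_mul_sum, ← Finset.sum_sub_distrib]
    refine Finset.sum_congr rfl fun v _ => ?_
    rw [← Finset.sum_sub_distrib]
    refine Finset.sum_congr rfl fun w _ => ?_
    rw [cR]
    ring
  rw [hmain, hIX2, hIY2]
  refine cov_fin μ hM hN hφ hmix RX RY _ _ _ _
    (fun v _ => hXfib v) ?_ ?_ (fun w _ => hYfib w) ?_ ?_
  · intro v _ w _ hvw
    exact Set.disjoint_left.mpr fun ω h1 h2 => hvw (by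
      simp only [Set.mem_preimage, Set.mem_singleton_iff] at h1 h2; rw [← h1, ← h2])
  · ext ω
    simp only [Set.mem_iUnion, Set.mem_preimage, Set.mem_singleton_iff, Set.mem_univ, iff_true]
    exact ⟨X ω, hRX ω, rfl⟩
  · intro v _ w _ hvw
    exact Set.disjoint_left.mpr fun ω h1 h2 => hvw (by
      simp only [Set.mem_preimage, Set.mem_singleton_iff] at h1 h2; rw [← h1, ← h2])
  · ext ω
    simp only [Set.mem_iUnion, Set.mem_preimage, Set.mem_singleton_iff, Set.mem_univ, iff_true]
    exact ⟨Y ω, hRY ω, rfl⟩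


open MeasureTheory in
lemma approx_exists {Ω' : Type*} [m : MeasurableSpace Ω'] {X : Ω' → ℝ} (hX : Measurable X) :
    ∃ Xk : ℕ → Ω' → ℝ,
      (∀ k, ∃ R : Finset ℝ, ∀ ω, Xk k ω ∈ R) ∧
      (∀ k, Measurable (Xk k)) ∧
      (∀ k (v : ℝ), MeasurableSet (Xk k ⁻¹' {v})) ∧
      (∀ k ω, |Xk k ω| ≤ 2 * |X ω|) ∧
      (∀ ω, Filter.Tendsto (fun k => Xk k ω) Filter.atTop (nhds (X ω))) := by
  have h0 : (0:ℝ) ∈ (Set.univ : Set ℝ) := Set.mem_univ 0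
  refine ⟨fun k => SimpleFunc.approxOn X hX Set.univ 0 h0 k, ?_, ?_, ?_, ?_, ?_⟩
  · exact fun k => ⟨(SimpleFunc.approxOn X hX Set.univ 0 h0 k).range,
      fun ω => SimpleFunc.mem_range_self _ ω⟩
  · exact fun k => (SimpleFunc.approxOn X hX Set.univ 0 h0 k).measurable
  · exact fun k v => (SimpleFunc.approxOn X hX Set.univ 0 h0 k).measurableSet_fiber v
  · intro k ω
    have := SimpleFunc.norm_approxOn_y₀_le hX h0 ω k
    simp only [sub_zero, Real.norm_eq_abs] at this
    linarith
  · intro ω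
    exact SimpleFunc.tendsto_approxOn hX h0 (by simp)

open MeasureTheory Filter in
lemma cov_L2 [IsProbabilityMeasure μ] (hM : M ≤ m0) (hN : N ≤ m0)
    {φ : ℝ} (hφ : 0 ≤ φ)
    (hmix : ∀ S T : Set Ω, MeasurableSet[M] S → MeasurableSet[N] T →
      |cR μ S T| ≤ φ * (μ S).toReal)
    {X Y : Ω → ℝ} (hX : Measurable[M] X) (hY : Measurable[N] Y)
    (hXi : Integrable X μ) (hYi : Integrable Y μ)
    (hXYi : Integrable (fun ω => X ω * Y ω) μ)
    (hX2 : Integrable (fun ω => X ω ^ 2) μ) (hY2 : Integrable (fun ω => Y ω ^ 2) μ) :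
    |∫ ω, X ω * Y ω ∂μ - (∫ ω, X ω ∂μ) * ∫ ω, Y ω ∂μ| ≤
      8 * Real.sqrt φ * (Real.sqrt (∫ ω, X ω ^ 2 ∂μ) * Real.sqrt (∫ ω, Y ω ^ 2 ∂μ)) := by
  obtain ⟨Xk, hXkR, hXkm, hXkfib, hXkb, hXkt⟩ := @approx_exists Ω M X hX
  obtain ⟨Yk, hYkR, hYkm, hYkfib, hYkb, hYkt⟩ := @approx_exists Ω N Y hY
  have hXkm0 : ∀ k, Measurable[m0] (Xk k) := fun k => (hXkm k).mono hM le_rfl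
  have hYkm0 : ∀ k, Measurable[m0] (Yk k) := fun k => (hYkm k).mono hN le_rfl
  -- integrability of the approximants
  have hXki : ∀ k, Integrable (Xk k) μ := fun k =>
    Integrable.mono' (hXi.abs.const_mul 2) (hXkm0 k).aestronglyMeasurable
      (Filter.Eventually.of_forall fun ω => by simpa using hXkb k ω)
  have hYki : ∀ k, Integrable (Yk k) μ := fun k =>
    Integrable.mono' (hYi.abs.const_mul 2) (hYkm0 k).aestronglyMeasurable
      (Filter.Eventually.of_forall fun ω => by simpa using hYkb k ω)
  have hXYkb : ∀ k ω, |Xk k ω * Yk k ω| ≤ 4 * |X ω * Y ω| := by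
    intro k ω
    rw [abs_mul, abs_mul]
    calc |Xk k ω| * |Yk k ω| ≤ (2 * |X ω|) * (2 * |Y ω|) :=
          mul_le_mul (hXkb k ω) (hYkb k ω) (abs_nonneg _) (by positivity)
      _ = 4 * (|X ω| * |Y ω|) := by ring
  have hXk2 : ∀ k, Integrable (fun ω => Xk k ω ^ 2) μ := fun k =>
    Integrable.mono' (hX2.const_mul 4) ((hXkm0 k).pow_const 2).aestronglyMeasurable
      (Filter.Eventually.of_forall fun ω => by
        rw [Real.norm_eq_abs, abs_pow, ← sq_abs (X ω)]
        calc |Xk k ω| ^ 2 ≤ (2 * |X ω|) ^ 2 := by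
              exact pow_le_pow_left₀ (abs_nonneg _) (hXkb k ω) 2
          _ = 4 * |X ω| ^ 2 := by ring)
  have hYk2 : ∀ k, Integrable (fun ω => Yk k ω ^ 2) μ := fun k =>
    Integrable.mono' (hY2.const_mul 4) ((hYkm0 k).pow_const 2).aestronglyMeasurable
      (Filter.Eventually.of_forall fun ω => by
        rw [Real.norm_eq_abs, abs_pow, ← sq_abs (Y ω)]
        calc |Yk k ω| ^ 2 ≤ (2 * |Y ω|) ^ 2 := by
              exact pow_le_pow_left₀ (abs_nonneg _) (hYkb k ω) 2
          _ = 4 * |Y ω| ^ 2 := by ring)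
  -- convergence of integrals
  have T1 : Tendsto (fun k => ∫ ω, Xk k ω * Yk k ω ∂μ) atTop (nhds (∫ ω, X ω * Y ω ∂μ)) := by
    refine tendsto_integral_of_dominated_convergence (fun ω => 4 * |X ω * Y ω|)
      (fun k => ((hXkm0 k).mul (hYkm0 k)).aestronglyMeasurable)
      (hXYi.abs.const_mul 4)
      (fun k => Filter.Eventually.of_forall fun ω => by
        rw [Real.norm_eq_abs]; exact hXYkb k ω)
      (Filter.Eventually.of_forall fun ω => (hXkt ω).mul (hYkt ω))
  have T2 : Tendsto (fun k => ∫ ω, Xk k ω ∂μ) atTop (nhds (∫ ω, X ω ∂μ)) := by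
    refine tendsto_integral_of_dominated_convergence (fun ω => 2 * |X ω|)
      (fun k => (hXkm0 k).aestronglyMeasurable) (hXi.abs.const_mul 2)
      (fun k => Filter.Eventually.of_forall fun ω => by simpa using hXkb k ω)
      (Filter.Eventually.of_forall fun ω => hXkt ω)
  have T3 : Tendsto (fun k => ∫ ω, Yk k ω ∂μ) atTop (nhds (∫ ω, Y ω ∂μ)) := by
    refine tendsto_integral_of_dominated_convergence (fun ω => 2 * |Y ω|)
      (fun k => (hYkm0 k).aestronglyMeasurable) (hYi.abs.const_mul 2)
      (fun k => Filter.Eventually.of_forall fun ω => by simpa using hYkb k ω)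
      (Filter.Eventually.of_forall fun ω => hYkt ω)
  have Tcov : Tendsto (fun k => |∫ ω, Xk k ω * Yk k ω ∂μ -
      (∫ ω, Xk k ω ∂μ) * ∫ ω, Yk k ω ∂μ|) atTop
      (nhds (|∫ ω, X ω * Y ω ∂μ - (∫ ω, X ω ∂μ) * ∫ ω, Y ω ∂μ|)) :=
    (T1.sub (T2.mul T3)).abs
  -- uniform bound for each k
  have hboundk : ∀ k, |∫ ω, Xk k ω * Yk k ω ∂μ - (∫ ω, Xk k ω ∂μ) * ∫ ω, Yk k ω ∂μ| ≤
      8 * Real.sqrt φ * (Real.sqrt (∫ ω, X ω ^ 2 ∂μ) * Real.sqrt (∫ ω, Y ω ^ 2 ∂μ)) := by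
    intro k
    obtain ⟨RX, hRX⟩ := hXkR k
    obtain ⟨RY, hRY⟩ := hYkR k
    have step := cov_finite_range μ hM hN hφ hmix hRX hRY (hXkfib k) (hYkfib k)
    have hsqX : Real.sqrt (∫ ω, Xk k ω ^ 2 ∂μ) ≤ 2 * Real.sqrt (∫ ω, X ω ^ 2 ∂μ) := by
      have hle : ∫ ω, Xk k ω ^ 2 ∂μ ≤ ∫ ω, 4 * X ω ^ 2 ∂μ := by
        refine integral_mono (hXk2 k) (hX2.const_mul 4) fun ω => ?_
        rw [← sq_abs (Xk k ω), ← sq_abs (X ω)]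
        calc |Xk k ω| ^ 2 ≤ (2 * |X ω|) ^ 2 := pow_le_pow_left₀ (abs_nonneg _) (hXkb k ω) 2
          _ = 4 * |X ω| ^ 2 := by ring
      calc Real.sqrt (∫ ω, Xk k ω ^ 2 ∂μ) ≤ Real.sqrt (4 * ∫ ω, X ω ^ 2 ∂μ) := by
            refine Real.sqrt_le_sqrt ?_
            rwa [integral_const_mul] at hle
        _ = 2 * Real.sqrt (∫ ω, X ω ^ 2 ∂μ) := by
            rw [show (4:ℝ) = 2 ^ 2 by norm_num, Real.sqrt_mul (by positivity),
              Real.sqrt_sq (by norm_num : (0:ℝ) ≤ 2)]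
    have hsqY : Real.sqrt (∫ ω, Yk k ω ^ 2 ∂μ) ≤ 2 * Real.sqrt (∫ ω, Y ω ^ 2 ∂μ) := by
      have hle : ∫ ω, Yk k ω ^ 2 ∂μ ≤ ∫ ω, 4 * Y ω ^ 2 ∂μ := by
        refine integral_mono (hYk2 k) (hY2.const_mul 4) fun ω => ?_
        rw [← sq_abs (Yk k ω), ← sq_abs (Y ω)]
        calc |Yk k ω| ^ 2 ≤ (2 * |Y ω|) ^ 2 := pow_le_pow_left₀ (abs_nonneg _) (hYkb k ω) 2
          _ = 4 * |Y ω| ^ 2 := by ring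
      calc Real.sqrt (∫ ω, Yk k ω ^ 2 ∂μ) ≤ Real.sqrt (4 * ∫ ω, Y ω ^ 2 ∂μ) := by
            refine Real.sqrt_le_sqrt ?_
            rwa [integral_const_mul] at hle
        _ = 2 * Real.sqrt (∫ ω, Y ω ^ 2 ∂μ) := by
            rw [show (4:ℝ) = 2 ^ 2 by norm_num, Real.sqrt_mul (by positivity),
              Real.sqrt_sq (by norm_num : (0:ℝ) ≤ 2)]
    refine step.trans ?_
    calc 2 * Real.sqrt φ * (Real.sqrt (∫ ω, Xk k ω ^ 2 ∂μ) * Real.sqrt (∫ ω, Yk k ω ^ 2 ∂μ))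
        ≤ 2 * Real.sqrt φ *
          ((2 * Real.sqrt (∫ ω, X ω ^ 2 ∂μ)) * (2 * Real.sqrt (∫ ω, Y ω ^ 2 ∂μ))) := by
          refine mul_le_mul_of_nonneg_left ?_ (by positivity)
          exact mul_le_mul hsqX hsqY (Real.sqrt_nonneg _) (by positivity)
      _ = 8 * Real.sqrt φ * (Real.sqrt (∫ ω, X ω ^ 2 ∂μ) * Real.sqrt (∫ ω, Y ω ^ 2 ∂μ)) := by
          ring
  exact le_of_tendsto Tcov (Filter.Eventually.of_forall hboundk)

end MixAux

section AuxApp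
open HCryst MeasureTheory Filter Topology

variable {d n : ℕ} [NeZero d]

lemma phiMix_bddAbove (μ : Measure (Conf d n)) [IsProbabilityMeasure μ] (r : ℝ) :
    BddAbove {x : ℝ | ∃ A B : Set (Lat d), (∀ a ∈ A, 0 < a 0) ∧ (∀ b ∈ B, 0 < b 0) ∧
      (∀ a ∈ A, ∀ b ∈ B, r ≤ znorm d (a - b)) ∧
      ∃ SA SB : Set (Conf d n),
        MeasurableSet[cylSig d n A] SA ∧ MeasurableSet[cylSig d n B] SB ∧
        0 < μ SB ∧
        x = |(μ (SA ∩ SB)).toReal - (μ SA).toReal * (μ SB).toReal| / (μ SB).toReal} := by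
  refine ⟨1, ?_⟩
  rintro x ⟨A, B, _, _, _, SA, SB, _, _, hpos, rfl⟩
  have hSBfin : μ SB ≠ ⊤ := measure_ne_top μ SB
  have h1 : (μ (SA ∩ SB)).toReal ≤ (μ SB).toReal :=
    ENNReal.toReal_mono hSBfin (measure_mono Set.inter_subset_right)
  have h2 : (μ SA).toReal * (μ SB).toReal ≤ (μ SB).toReal := by
    have hle : (μ SA).toReal ≤ 1 := by
      have := prob_le_one (μ := μ) (s := SA)
      calc (μ SA).toReal ≤ (1 : ℝ≥0∞).toReal := ENNReal.toReal_mono (by simp) this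
        _ = 1 := by simp
    nlinarith [ENNReal.toReal_nonneg (a := μ SB)]
  have h0 : (0:ℝ) < (μ SB).toReal := ENNReal.toReal_pos (ne_of_gt hpos) hSBfin
  rw [div_le_one h0, abs_sub_le_iff]
  constructor
  · have := mul_nonneg (ENNReal.toReal_nonneg (a := μ SA)) (ENNReal.toReal_nonneg (a := μ SB))
    linarith
  · have := ENNReal.toReal_nonneg (a := μ (SA ∩ SB))
    linarith

lemma phiMix_zero_mem (μ : Measure (Conf d n)) [IsProbabilityMeasure μ] (r : ℝ) :
    (0 : ℝ) ∈ {x : ℝ | ∃ A B : Set (Lat d), (∀ a ∈ A, 0 < a 0) ∧ (∀ b ∈ B, 0 < b 0) ∧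
      (∀ a ∈ A, ∀ b ∈ B, r ≤ znorm d (a - b)) ∧
      ∃ SA SB : Set (Conf d n),
        MeasurableSet[cylSig d n A] SA ∧ MeasurableSet[cylSig d n B] SB ∧
        0 < μ SB ∧
        x = |(μ (SA ∩ SB)).toReal - (μ SA).toReal * (μ SB).toReal| / (μ SB).toReal} := by
  refine ⟨∅, ∅, by simp, by simp, by simp, Set.univ, Set.univ,
    MeasurableSet.univ, MeasurableSet.univ, by simp, ?_⟩
  simp [measure_univ]

lemma phiMix_nonneg (μ : Measure (Conf d n)) [IsProbabilityMeasure μ] (r : ℝ) :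
    0 ≤ phiMix d n μ r :=
  le_csSup (phiMix_bddAbove μ r) (phiMix_zero_mem μ r)

lemma phiMix_antitone (μ : Measure (Conf d n)) [IsProbabilityMeasure μ] :
    Antitone (phiMix d n μ) := by
  intro r1 r2 h
  refine csSup_le_csSup (phiMix_bddAbove μ r1) ⟨0, phiMix_zero_mem μ r2⟩ ?_
  rintro x ⟨A, B, hA, hB, hdist, rest⟩
  exact ⟨A, B, hA, hB, fun a ha b hb => h.trans (hdist a ha b hb), rest⟩

lemma phiMix_event_bound (μ : Measure (Conf d n)) [IsProbabilityMeasure μ] (r : ℝ)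
    (A B : Set (Lat d)) (hA : ∀ a ∈ A, 0 < a 0) (hB : ∀ b ∈ B, 0 < b 0)
    (hdist : ∀ a ∈ A, ∀ b ∈ B, r ≤ znorm d (a - b))
    {SA SB : Set (Conf d n)}
    (mSA : MeasurableSet[cylSig d n A] SA) (mSB : MeasurableSet[cylSig d n B] SB) :
    |(μ (SA ∩ SB)).toReal - (μ SA).toReal * (μ SB).toReal| ≤
      phiMix d n μ r * (μ SB).toReal := by
  rcases eq_or_lt_of_le (zero_le : 0 ≤ μ SB) with h0 | hpos
  · have hz : μ (SA ∩ SB) = 0 :=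
      le_antisymm (le_trans (measure_mono Set.inter_subset_right) h0.ge) zero_le
    rw [hz, ← h0]
    simp
  · have hSBfin : μ SB ≠ ⊤ := measure_ne_top μ SB
    have h0' : (0:ℝ) < (μ SB).toReal := ENNReal.toReal_pos (ne_of_gt hpos) hSBfin
    have hmem : |(μ (SA ∩ SB)).toReal - (μ SA).toReal * (μ SB).toReal| / (μ SB).toReal ≤
        phiMix d n μ r := by
      refine le_csSup (phiMix_bddAbove μ r) ?_
      exact ⟨A, B, hA, hB, hdist, SA, SB, mSA, mSB, hpos, rfl⟩
    calc |(μ (SA ∩ SB)).toReal - (μ SA).toReal * (μ SB).toReal|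
        = (|(μ (SA ∩ SB)).toReal - (μ SA).toReal * (μ SB).toReal| / (μ SB).toReal) *
            (μ SB).toReal := by field_simp
      _ ≤ phiMix d n μ r * (μ SB).toReal :=
          mul_le_mul_of_nonneg_right hmem h0'.le

lemma cylSig_le (A : Set (Lat d)) :
    cylSig d n A ≤ (inferInstance : MeasurableSpace (Conf d n)) := by
  rw [cylSig]
  refine MeasurableSpace.comap_le_iff_le_map.mpr ?_
  rw [← measurable_iff_le_map]
  exact measurable_pi_lambda _ (fun z => measurable_pi_apply z.1)

lemma comp2_measurable (a : I2 n) : Measurable (fun v : Pt n => comp2 n v a) := by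
  cases a with
  | inl i => exact (measurable_pi_apply i).comp measurable_fst
  | inr i => exact (measurable_pi_apply i).comp measurable_snd

lemma coord_measurable_cylSig (w : Lat d) (a : I2 n) :
    Measurable[cylSig d n {w}] (fun Y : Conf d n => comp2 n (Y w) a) := by
  have hproj : Measurable[cylSig d n {w}]
      (fun (Y : Conf d n) (z : ({w} : Set (Lat d))) => Y z.1) := by
    rw [cylSig]; exact measurable_iff_comap_le.mpr le_rfl
  have heval : Measurable (fun g : ({w} : Set (Lat d)) → Pt n =>
      comp2 n (g ⟨w, rfl⟩) a) :=
    (comp2_measurable a).comp (measurable_pi_apply _)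
  exact heval.comp hproj


lemma znorm_sub_comm (w z : Lat d) : znorm d (z - w) = znorm d (w - z) := by
  have : zsq d (z - w) = zsq d (w - z) := by
    unfold zsq
    refine Finset.sum_congr rfl fun i _ => ?_
    have : (z - w) i = -((w - z) i) := by simp only [Pi.sub_apply]; ring
    rw [this]
    push_cast
    ring
  unfold znorm
  rw [this]

lemma qmat_diag_nonneg (μ : Measure (Conf d n)) (z : Lat d) (c : I2 n) :
    0 ≤ Qmat d n μ z z c c := by
  simp only [Qmat, Matrix.of_apply]
  exact integral_nonneg fun Y => mul_self_nonneg _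

lemma qmat_entry_bound (μ : Measure (Conf d n)) [IsProbabilityMeasure μ]
    (hS1 : CondS1 d n μ) (hFV : FinVar d n μ) {e₀ : ℝ}
    (he : ∀ z : Lat d, ∑ a : I2 n, Qmat d n μ z z a a ≤ e₀)
    (w z' : Lat d) (hw : 0 < w 0) (hz' : 0 < z' 0) (a b : I2 n) :
    |Qmat d n μ w z' a b| ≤ 8 * Real.sqrt (phiMix d n μ (znorm d (w - z'))) * e₀ := by
  set r := znorm d (w - z') with hr
  have hφ0 : 0 ≤ phiMix d n μ r := phiMix_nonneg μ r
  set X : Conf d n → ℝ := fun Y => comp2 n (Y w) a with hX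
  set Z : Conf d n → ℝ := fun Y => comp2 n (Y z') b with hZ
  have hmix : ∀ S T : Set (Conf d n), MeasurableSet[cylSig d n {w}] S →
      MeasurableSet[cylSig d n {z'}] T →
      |MixAux.cR μ S T| ≤ phiMix d n μ r * (μ S).toReal := by
    intro S T hS hT
    have h := phiMix_event_bound μ r {z'} {w}
      (by intro x hx; rw [Set.mem_singleton_iff] at hx; rw [hx]; exact hz')
      (by intro x hx; rw [Set.mem_singleton_iff] at hx; rw [hx]; exact hw)
      (by
        intro x hx y hy
        rw [Set.mem_singleton_iff] at hx hy
        rw [hx, hy, hr]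
        exact (znorm_sub_comm w z').ge)
      hT hS
    rw [MixAux.cR, Set.inter_comm S T, mul_comm ((μ S).toReal) ((μ T).toReal)]
    exact h
  have hXm := coord_measurable_cylSig w a
  have hZm := coord_measurable_cylSig z' b
  have hXi : Integrable X μ := (hS1 w a).1
  have hZi : Integrable Z μ := (hS1 z' b).1
  have hXZi : Integrable (fun Y => X Y * Z Y) μ := hFV w z' a b
  have hX2 : Integrable (fun Y => X Y ^ 2) μ :=
    (hFV w w a a).congr (Filter.Eventually.of_forall fun Y => (sq (X Y)).symm)
  have hZ2 : Integrable (fun Y => Z Y ^ 2) μ :=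
    (hFV z' z' b b).congr (Filter.Eventually.of_forall fun Y => (sq (Z Y)).symm)
  have hcov := MixAux.cov_L2 μ (cylSig_le {w}) (cylSig_le {z'}) hφ0 hmix hXm hZm
    hXi hZi hXZi hX2 hZ2
  have hX0 : ∫ Y, X Y ∂μ = 0 := (hS1 w a).2
  have hZ0 : ∫ Y, Z Y ∂μ = 0 := (hS1 z' b).2
  rw [hX0, hZ0, zero_mul, sub_zero] at hcov
  have hQform : Qmat d n μ w z' a b = ∫ Y, X Y * Z Y ∂μ := rfl
  have hX2Q : ∫ Y, X Y ^ 2 ∂μ = Qmat d n μ w w a a := by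
    simp only [Qmat, Matrix.of_apply]
    refine integral_congr_ae (Filter.Eventually.of_forall fun Y => ?_)
    exact sq (X Y)
  have hZ2Q : ∫ Y, Z Y ^ 2 ∂μ = Qmat d n μ z' z' b b := by
    simp only [Qmat, Matrix.of_apply]
    refine integral_congr_ae (Filter.Eventually.of_forall fun Y => ?_)
    exact sq (Z Y)
  have he0 : 0 ≤ e₀ :=
    le_trans (Finset.sum_nonneg fun c _ => qmat_diag_nonneg μ w c) (he w)
  have hQw : Qmat d n μ w w a a ≤ e₀ :=
    le_trans (Finset.single_le_sum (fun c _ => qmat_diag_nonneg μ w c)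
      (Finset.mem_univ a)) (he w)
  have hQz : Qmat d n μ z' z' b b ≤ e₀ :=
    le_trans (Finset.single_le_sum (fun c _ => qmat_diag_nonneg μ z' c)
      (Finset.mem_univ b)) (he z')
  rw [hQform]
  refine hcov.trans ?_
  have h1 : Real.sqrt (∫ Y, X Y ^ 2 ∂μ) ≤ Real.sqrt e₀ :=
    Real.sqrt_le_sqrt (hX2Q ▸ hQw)
  have h2 : Real.sqrt (∫ Y, Z Y ^ 2 ∂μ) ≤ Real.sqrt e₀ :=
    Real.sqrt_le_sqrt (hZ2Q ▸ hQz)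
  calc 8 * Real.sqrt (phiMix d n μ r) *
        (Real.sqrt (∫ Y, X Y ^ 2 ∂μ) * Real.sqrt (∫ Y, Z Y ^ 2 ∂μ))
      ≤ 8 * Real.sqrt (phiMix d n μ r) * (Real.sqrt e₀ * Real.sqrt e₀) := by
        refine mul_le_mul_of_nonneg_left ?_ (by positivity)
        exact mul_le_mul h1 h2 (Real.sqrt_nonneg _) (Real.sqrt_nonneg _)
    _ = 8 * Real.sqrt (phiMix d n μ r) * e₀ := by rw [Real.mul_self_sqrt he0]

lemma q0_entry_bound (μ : Measure (Conf d n)) [IsProbabilityMeasure μ]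
    (hS1 : CondS1 d n μ) (hFV : FinVar d n μ) {e₀ : ℝ}
    (he : ∀ z : Lat d, ∑ a : I2 n, Qmat d n μ z z a a ≤ e₀)
    (q0 : Lat d → Matrix (I2 n) (I2 n) ℝ)
    (hlim : ∀ z : Lat d, Tendsto (fun y : ℕ =>
      Qmat d n μ (Function.update z 0 (z 0 + y)) (fun i => if i = 0 then (y:ℤ) else 0))
      atTop (𝓝 (q0 z)))
    (z : Lat d) (a b : I2 n) :
    |q0 z a b| ≤ 8 * Real.sqrt (phiMix d n μ (znorm d z)) * e₀ := by
  have hT := hlim z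
  have hentry : Tendsto (fun y : ℕ =>
      Qmat d n μ (Function.update z 0 (z 0 + y)) (fun i => if i = 0 then (y:ℤ) else 0) a b)
      atTop (𝓝 (q0 z a b)) := by
    have h1 := tendsto_pi_nhds.mp hT a
    exact tendsto_pi_nhds.mp h1 b
  refine le_of_tendsto hentry.abs ?_
  filter_upwards [Filter.eventually_ge_atTop ((1 - z 0).toNat + 1)] with y hy
  have hyZ : ((1 - z 0).toNat : ℤ) < (y : ℤ) := by exact_mod_cast hy
  have hself := Int.self_le_toNat (1 - z 0)
  have hw0 : 0 < Function.update z 0 (z 0 + (y:ℤ)) 0 := by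
    rw [Function.update_self]; omega
  have hz''0 : 0 < (fun i : Fin d => if i = 0 then (y:ℤ) else 0) 0 := by
    simp only [eq_self_iff_true, if_true]; omega
  have hdiff : (Function.update z 0 (z 0 + (y:ℤ)) - fun i => if i = 0 then (y:ℤ) else 0) = z := by
    funext i
    by_cases hi : i = 0
    · subst hi
      simp only [Pi.sub_apply, Function.update_self, eq_self_iff_true, if_true]
      ring
    · simp only [Pi.sub_apply, Function.update_of_ne hi, if_neg hi, sub_zero]
  have hb := qmat_entry_bound μ hS1 hFV he (Function.update z 0 (z 0 + (y:ℤ)))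
    (fun i : Fin d => if i = 0 then (y:ℤ) else 0) hw0 hz''0 a b
  rwa [hdiff] at hb


lemma phiMix_le_one (μ : Measure (Conf d n)) [IsProbabilityMeasure μ] (r : ℝ) :
    phiMix d n μ r ≤ 1 := by
  refine csSup_le ⟨0, phiMix_zero_mem μ r⟩ ?_
  rintro x ⟨A, B, _, _, _, SA, SB, _, _, hpos, rfl⟩
  have hSBfin : μ SB ≠ ⊤ := measure_ne_top μ SB
  have h1 : (μ (SA ∩ SB)).toReal ≤ (μ SB).toReal :=
    ENNReal.toReal_mono hSBfin (measure_mono Set.inter_subset_right)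
  have h2 : (μ SA).toReal * (μ SB).toReal ≤ (μ SB).toReal := by
    have hle : (μ SA).toReal ≤ 1 := by
      have := prob_le_one (μ := μ) (s := SA)
      calc (μ SA).toReal ≤ (1 : ℝ≥0∞).toReal := ENNReal.toReal_mono (by simp) this
        _ = 1 := by simp
    nlinarith [ENNReal.toReal_nonneg (a := μ SB)]
  have h0 : (0:ℝ) < (μ SB).toReal := ENNReal.toReal_pos (ne_of_gt hpos) hSBfin
  rw [div_le_one h0, abs_sub_le_iff]
  constructor
  · have := mul_nonneg (ENNReal.toReal_nonneg (a := μ SA)) (ENNReal.toReal_nonneg (a := μ SB))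
    linarith
  · have := ENNReal.toReal_nonneg (a := μ (SA ∩ SB))
    linarith

/-- sup-norm of a lattice point -/
def msup (z : Lat d) : ℕ := Finset.univ.sup fun i => (z i).natAbs

lemma msup_cast_le_znorm (z : Lat d) : ((msup z : ℕ) : ℝ) ≤ znorm d z := by
  haveI : Nonempty (Fin d) := ⟨⟨0, Nat.pos_of_ne_zero (NeZero.ne d)⟩⟩
  obtain ⟨i, _, hi⟩ := Finset.exists_mem_eq_sup Finset.univ Finset.univ_nonempty
    (fun i : Fin d => (z i).natAbs)
  rw [msup, hi]
  have h1 : (((z i).natAbs : ℕ) : ℝ) = |((z i : ℤ) : ℝ)| := by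
    rw [Nat.cast_natAbs]
    push_cast
    rfl
  rw [h1, znorm, ← Real.sqrt_sq_eq_abs]
  refine Real.sqrt_le_sqrt ?_
  exact Finset.single_le_sum (fun j _ => sq_nonneg ((z j : ℤ) : ℝ)) (Finset.mem_univ i)

/-- box of radius `k` -/
def boxF (d : ℕ) (k : ℕ) : Finset (Lat d) :=
  Fintype.piFinset fun _ : Fin d => Finset.Icc (-(k:ℤ)) (k:ℤ)

lemma mem_boxF {k : ℕ} {z : Lat d} : z ∈ boxF d k ↔ msup z ≤ k := by
  rw [boxF, Fintype.mem_piFinset, msup]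
  rw [Finset.sup_le_iff]
  constructor
  · intro h i _
    have := h i
    rw [Finset.mem_Icc] at this
    omega
  · intro h i
    rw [Finset.mem_Icc]
    have := h i (Finset.mem_univ i)
    omega

lemma card_boxF (k : ℕ) : (boxF d k).card = (2*k+1)^d := by
  rw [boxF, Fintype.card_piFinset]
  have h : ∀ _i : Fin d, (Finset.Icc (-(k:ℤ)) (k:ℤ)).card = 2*k+1 := fun _ => by
    rw [Int.card_Icc]; omega
  rw [Finset.prod_congr rfl (fun i _ => h i), Finset.prod_const, Finset.card_univ,
    Fintype.card_fin]

lemma boxF_mono {k l : ℕ} (h : k ≤ l) : boxF d k ⊆ boxF d l := by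
  intro z hz
  rw [mem_boxF] at hz ⊢
  omega

lemma pow_sub_pow_le_aux (x y : ℝ) (hy0 : 0 ≤ y) (hyx : y ≤ x) (p : ℕ) :
    x ^ (p+1) - y ^ (p+1) ≤ (p+1 : ℝ) * x ^ p * (x - y) := by
  have hx0 : 0 ≤ x := le_trans hy0 hyx
  rw [← geom_sum₂_mul x y (p+1)]
  refine mul_le_mul_of_nonneg_right ?_ (by linarith)
  calc ∑ i ∈ Finset.range (p+1), x^i * y^(p+1-1-i)
      ≤ ∑ _i ∈ Finset.range (p+1), x^p := by
        refine Finset.sum_le_sum fun i hi => ?_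
        rw [Finset.mem_range] at hi
        calc x^i * y^(p+1-1-i) ≤ x^i * x^(p+1-1-i) :=
              mul_le_mul_of_nonneg_left (pow_le_pow_left₀ hy0 hyx _) (pow_nonneg hx0 i)
          _ = x^p := by rw [← pow_add]; congr 1; omega
    _ = (p+1 : ℝ) * x^p := by
        rw [Finset.sum_const, Finset.card_range, nsmul_eq_mul]
        push_cast
        ring

lemma pow_sub_pow_le (x y : ℝ) (hy0 : 0 ≤ y) (hyx : y ≤ x) {m : ℕ} (hm : 1 ≤ m) :
    x ^ m - y ^ m ≤ (m:ℝ) * x ^ (m-1) * (x - y) := by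
  obtain ⟨p, rfl⟩ : ∃ p, m = p + 1 := ⟨m - 1, by omega⟩
  have := pow_sub_pow_le_aux x y hy0 hyx p
  simpa using this

lemma summable_shell {g : ℝ → ℝ} (hg0 : ∀ r, 0 ≤ g r) (hg1 : ∀ r, g r ≤ 1)
    (hanti : Antitone g)
    (hint : IntegrableOn (fun r : ℝ => r ^ (d - 1) * g r) (Set.Ioi 0)) :
    Summable fun z : Lat d => g (znorm d z) := by
  classical
  set f : ℝ → ℝ := fun r => r ^ (d-1) * g r with hfdef
  set CI : ℝ := ∫ r in Set.Ioi (0:ℝ), f r with hCI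
  have hf0 : 0 ≤ᶠ[ae (volume.restrict (Set.Ioi (0:ℝ)))] f := by
    refine (ae_restrict_iff' measurableSet_Ioi).mpr ?_
    exact Filter.Eventually.of_forall fun r hr =>
      mul_nonneg (pow_nonneg (le_of_lt hr) _) (hg0 r)
  have hCI0 : 0 ≤ CI := integral_nonneg_of_ae hf0
  -- step 1 : partial sums of k^{d-1} g k are bounded
  have step1 : ∀ K : ℕ, ∑ k ∈ Finset.Icc 1 K, ((k:ℝ))^(d-1) * g k ≤ 1 + 2^(d-1) * CI := by
    intro K
    rcases Nat.lt_or_ge K 1 with hK | hK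
    · have hemp : Finset.Icc 1 K = (∅ : Finset ℕ) := Finset.Icc_eq_empty (by omega)
      rw [hemp, Finset.sum_empty]
      positivity
    · have hsplit : Finset.Icc 1 K = insert 1 (Finset.Icc 2 K) := by
        ext x
        simp only [Finset.mem_Icc, Finset.mem_insert]
        omega
      have h1notin : (1:ℕ) ∉ Finset.Icc 2 K := by simp
      rw [hsplit, Finset.sum_insert h1notin]
      have hterm : ∀ k ∈ Finset.Icc 2 K,
          ((k:ℝ))^(d-1) * g k ≤ 2^(d-1) * ∫ r in Set.Ioc ((k:ℝ)-1) k, f r := by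
        intro k hk
        rw [Finset.mem_Icc] at hk
        have hk2 : (2:ℝ) ≤ (k:ℝ) := by exact_mod_cast hk.1
        have hsub : Set.Ioc ((k:ℝ)-1) k ⊆ Set.Ioi 0 := by
          intro r hr
          have := hr.1
          simp only [Set.mem_Ioi]
          linarith
        have hIk : IntegrableOn f (Set.Ioc ((k:ℝ)-1) k) := hint.mono_set hsub
        have hconst : ((k:ℝ)-1)^(d-1) * g k ≤ ∫ r in Set.Ioc ((k:ℝ)-1) k, f r := by
          have hmono := setIntegral_mono_on
            (integrableOn_const (C := ((k:ℝ)-1)^(d-1) * g k) (by rw [Real.volume_Ioc]; exact ENNReal.ofReal_ne_top))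
            hIk measurableSet_Ioc
            (fun r hr => by
              have hr1 : (k:ℝ)-1 < r := hr.1
              have hr2 : r ≤ k := hr.2
              have hrpos : (0:ℝ) ≤ (k:ℝ)-1 := by linarith
              refine mul_le_mul (pow_le_pow_left₀ hrpos hr1.le _) (hanti hr2) (hg0 _)
                (pow_nonneg (by linarith) _))
          calc ((k:ℝ)-1)^(d-1) * g k
              = ∫ _r in Set.Ioc ((k:ℝ)-1) k, ((k:ℝ)-1)^(d-1) * g k := by
                rw [setIntegral_const, measureReal_def, Real.volume_Ioc,
                  show (k:ℝ) - ((k:ℝ)-1) = 1 by ring, ENNReal.ofReal_one,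
                  ENNReal.toReal_one, one_smul]
            _ ≤ ∫ r in Set.Ioc ((k:ℝ)-1) k, f r := hmono
        have hpow : ((k:ℝ))^(d-1) ≤ 2^(d-1) * ((k:ℝ)-1)^(d-1) := by
          rw [← mul_pow]
          exact pow_le_pow_left₀ (by linarith) (by linarith) _
        calc ((k:ℝ))^(d-1) * g k ≤ (2^(d-1) * ((k:ℝ)-1)^(d-1)) * g k :=
              mul_le_mul_of_nonneg_right hpow (hg0 _)
          _ = 2^(d-1) * (((k:ℝ)-1)^(d-1) * g k) := by ring
          _ ≤ 2^(d-1) * ∫ r in Set.Ioc ((k:ℝ)-1) k, f r :=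
              mul_le_mul_of_nonneg_left hconst (by positivity)
      have hsum2 : ∑ k ∈ Finset.Icc 2 K, ∫ r in Set.Ioc ((k:ℝ)-1) k, f r ≤ CI := by
        have hmeas : ∀ k ∈ Finset.Icc 2 K, MeasurableSet (Set.Ioc ((k:ℝ)-1) (k:ℝ)) :=
          fun k _ => measurableSet_Ioc
        have hdisj : (↑(Finset.Icc 2 K) : Set ℕ).Pairwise
            (Function.onFun Disjoint fun k : ℕ => Set.Ioc ((k:ℝ)-1) (k:ℝ)) := by
          intro i hi j hj hij
          simp only [Finset.coe_Icc, Set.mem_Icc] at hi hj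
          refine Set.disjoint_left.mpr fun r hri hrj => ?_
          rcases lt_or_gt_of_ne hij with h | h
          · have hij' : (i:ℝ) ≤ (j:ℝ) - 1 := by
              have : (i:ℝ) + 1 ≤ (j:ℝ) := by exact_mod_cast h
              linarith
            exact absurd (lt_of_le_of_lt (hri.2.trans hij') hrj.1) (lt_irrefl r)
          · have hij' : (j:ℝ) ≤ (i:ℝ) - 1 := by
              have : (j:ℝ) + 1 ≤ (i:ℝ) := by exact_mod_cast h
              linarith
            exact absurd (lt_of_le_of_lt (hrj.2.trans hij') hri.1) (lt_irrefl r)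
        have hIkk : ∀ k ∈ Finset.Icc 2 K, IntegrableOn f (Set.Ioc ((k:ℝ)-1) (k:ℝ)) := by
          intro k hk
          rw [Finset.mem_Icc] at hk
          refine hint.mono_set fun r hr => ?_
          have h2 : (2:ℝ) ≤ (k:ℝ) := by exact_mod_cast hk.1
          have := hr.1
          simp only [Set.mem_Ioi]
          linarith
        rw [← integral_biUnion_finset (Finset.Icc 2 K) hmeas hdisj hIkk]
        refine setIntegral_mono_set hint hf0 (HasSubset.Subset.eventuallyLE ?_)
        intro r hr
        simp only [Set.mem_iUnion] at hr
        obtain ⟨k, hk, hrk⟩ := hr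
        rw [Finset.mem_Icc] at hk
        have h2 : (2:ℝ) ≤ (k:ℝ) := by exact_mod_cast hk.1
        have := hrk.1
        simp only [Set.mem_Ioi]
        linarith
      refine le_trans (add_le_add (by simpa using hg1 1) (Finset.sum_le_sum hterm)) ?_
      rw [← Finset.mul_sum]
      exact add_le_add_right (mul_le_mul_of_nonneg_left hsum2 (by positivity)) 1
  -- step 2 : partial sums over boxes
  have hd1 : 1 ≤ d := Nat.pos_of_ne_zero (NeZero.ne d)
  set B : ℝ := 1 + (2*d*3^(d-1)) * (1 + 2^(d-1)*CI) with hB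
  have claim : ∀ K : ℕ, ∑ z ∈ boxF d K, g ((msup z : ℕ) : ℝ) ≤
      1 + ∑ k ∈ Finset.Icc 1 K, (((2*k+1)^d - (2*k-1)^d : ℕ) : ℝ) * g k := by
    intro K
    induction K with
    | zero =>
      have : Finset.Icc 1 0 = (∅ : Finset ℕ) := Finset.Icc_eq_empty (by omega)
      rw [this, Finset.sum_empty, add_zero]
      calc ∑ z ∈ boxF d 0, g ((msup z : ℕ) : ℝ)
          ≤ ∑ _z ∈ boxF d 0, (1:ℝ) := Finset.sum_le_sum fun z _ => hg1 _
        _ = ((boxF d 0).card : ℝ) := by rw [Finset.sum_const, nsmul_eq_mul, mul_one]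
        _ = 1 := by rw [card_boxF]; norm_num
    | succ K ih =>
      have hsubset : boxF d K ⊆ boxF d (K+1) := boxF_mono (Nat.le_succ K)
      rw [← Finset.sum_sdiff hsubset]
      have hsd : ∑ z ∈ boxF d (K+1) \ boxF d K, g ((msup z : ℕ) : ℝ) ≤
          (((2*(K+1)+1)^d - (2*(K+1)-1)^d : ℕ) : ℝ) * g ((K+1 : ℕ) : ℝ) := by
        have hcard : (boxF d (K+1) \ boxF d K).card = (2*(K+1)+1)^d - (2*(K+1)-1)^d := by
          rw [Finset.card_sdiff_of_subset hsubset, card_boxF, card_boxF]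
          have h21 : 2*(K+1)-1 = 2*K+1 := by omega
          rw [h21]
        have hbd : ∀ z ∈ boxF d (K+1) \ boxF d K, g ((msup z : ℕ) : ℝ) ≤ g ((K+1 : ℕ) : ℝ) := by
          intro z hz
          rw [Finset.mem_sdiff, mem_boxF, mem_boxF] at hz
          refine hanti ?_
          have : K + 1 ≤ msup z := by omega
          exact_mod_cast this
        calc ∑ z ∈ boxF d (K+1) \ boxF d K, g ((msup z : ℕ) : ℝ)
            ≤ ∑ _z ∈ boxF d (K+1) \ boxF d K, g ((K+1 : ℕ) : ℝ) :=
              Finset.sum_le_sum hbd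
          _ = (((2*(K+1)+1)^d - (2*(K+1)-1)^d : ℕ) : ℝ) * g ((K+1 : ℕ) : ℝ) := by
              rw [Finset.sum_const, nsmul_eq_mul, hcard]
      rw [Finset.sum_Icc_succ_top (by omega : 1 ≤ K + 1)]
      push_cast at hsd ⊢
      linarith [ih, hsd]
  have cardbound : ∀ k : ℕ, 1 ≤ k →
      (((2*k+1)^d - (2*k-1)^d : ℕ) : ℝ) ≤ (2*d*3^(d-1)) * ((k:ℝ)^(d-1)) := by
    intro k hk
    have hle : (2*k-1)^d ≤ (2*k+1)^d := Nat.pow_le_pow_left (by omega) d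
    rw [Nat.cast_sub hle]
    have hc1 : (((2*k+1)^d : ℕ) : ℝ) = (2*(k:ℝ)+1)^d := by push_cast; ring
    have hc2 : (((2*k-1)^d : ℕ) : ℝ) = (2*(k:ℝ)-1)^d := by
      have : ((2*k-1 : ℕ) : ℝ) = 2*(k:ℝ)-1 := by
        rw [Nat.cast_sub (by omega)]
        push_cast
        ring
      rw [Nat.cast_pow, this]
    rw [hc1, hc2]
    have hk1 : (1:ℝ) ≤ (k:ℝ) := by exact_mod_cast hk
    have h1 := pow_sub_pow_le (2*(k:ℝ)+1) (2*(k:ℝ)-1) (by linarith) (by linarith) hd1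
    have h2 : (2*(k:ℝ)+1)^(d-1) ≤ (3*(k:ℝ))^(d-1) :=
      pow_le_pow_left₀ (by linarith) (by linarith) _
    calc (2*(k:ℝ)+1)^d - (2*(k:ℝ)-1)^d
        ≤ (d:ℝ) * (2*(k:ℝ)+1)^(d-1) * ((2*(k:ℝ)+1) - (2*(k:ℝ)-1)) := h1
      _ = 2*(d:ℝ) * (2*(k:ℝ)+1)^(d-1) := by ring
      _ ≤ 2*(d:ℝ) * (3*(k:ℝ))^(d-1) := by
          refine mul_le_mul_of_nonneg_left h2 (by positivity)
      _ = (2*d*3^(d-1)) * ((k:ℝ)^(d-1)) := by rw [mul_pow]; ring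
  have boxbound : ∀ K : ℕ, ∑ z ∈ boxF d K, g ((msup z : ℕ) : ℝ) ≤ B := by
    intro K
    refine (claim K).trans ?_
    rw [hB]
    have : ∑ k ∈ Finset.Icc 1 K, (((2*k+1)^d - (2*k-1)^d : ℕ) : ℝ) * g k ≤
        (2*d*3^(d-1)) * (1 + 2^(d-1)*CI) := by
      calc ∑ k ∈ Finset.Icc 1 K, (((2*k+1)^d - (2*k-1)^d : ℕ) : ℝ) * g k
          ≤ ∑ k ∈ Finset.Icc 1 K, (2*d*3^(d-1)) * ((k:ℝ)^(d-1)) * g k := by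
            refine Finset.sum_le_sum fun k hk => ?_
            rw [Finset.mem_Icc] at hk
            exact mul_le_mul_of_nonneg_right (cardbound k hk.1) (hg0 _)
        _ = (2*d*3^(d-1)) * ∑ k ∈ Finset.Icc 1 K, ((k:ℝ))^(d-1) * g k := by
            rw [Finset.mul_sum]
            refine Finset.sum_congr rfl fun k _ => ?_
            ring
        _ ≤ (2*d*3^(d-1)) * (1 + 2^(d-1)*CI) := by
            refine mul_le_mul_of_nonneg_left (step1 K) (by positivity)
    linarith
  -- conclude
  have hmain : Summable fun z : Lat d => g ((msup z : ℕ) : ℝ) := by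
    refine summable_of_sum_le (c := B) (fun z => hg0 _) fun F => ?_
    calc ∑ z ∈ F, g ((msup z : ℕ) : ℝ) ≤ ∑ z ∈ boxF d (F.sup msup), g ((msup z : ℕ) : ℝ) := by
          refine Finset.sum_le_sum_of_subset_of_nonneg ?_ (fun z _ _ => hg0 _)
          intro z hz
          rw [mem_boxF]
          exact Finset.le_sup hz
      _ ≤ B := boxbound _
  refine Summable.of_nonneg_of_le (fun z => hg0 _) (fun z => ?_) hmain
  exact hanti (msup_cast_le_znorm z)

lemma abs_entry_le_mnormR (M : Matrix (I2 n) (I2 n) ℝ) (a b : I2 n) :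
    |M a b| ≤ mnormR M := by
  rw [mnormR, ← Real.sqrt_sq_eq_abs]
  refine Real.sqrt_le_sqrt ?_
  calc (M a b)^2 ≤ ∑ b', (M a b')^2 :=
        Finset.single_le_sum (f := fun b' => (M a b')^2)
          (fun b' _ => sq_nonneg _) (Finset.mem_univ b)
    _ ≤ ∑ a', ∑ b', (M a' b')^2 :=
        Finset.single_le_sum (f := fun a' => ∑ b', (M a' b')^2)
          (fun a' _ => Finset.sum_nonneg fun b' _ => sq_nonneg _) (Finset.mem_univ a)

end AuxApp


/-- Proposition 5.2 (ii): the limit correlation functions `𝐪₀`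
decay like `φ^{1/2}`, are summable, and have continuous Fourier transform. -/
theorem limit_correlation_regularity
    (d n : ℕ) [NeZero d] (hd : 1 ≤ d) (hn : 1 ≤ n) (α : ℝ)
    (μ₀ : MeasureTheory.Measure (Conf d n)) (hprob : ProbHP d n α μ₀)
    (hS1 : CondS1 d n μ₀)
    (q0 : HCryst.Lat d → Matrix (I2 n) (I2 n) ℝ) (hS2 : CondS2 d n α μ₀ q0)
    (e₀ : ℝ) (hS3 : CondS3 d n μ₀ e₀) (hS4 : CondS4 d n μ₀) :
    ∃ C : ℝ, 0 < C ∧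
      (∀ z : HCryst.Lat d,
        mnormR (q0 z) ≤ C * e₀ * Real.sqrt (phiMix d n μ₀ (znorm d z))) ∧
      Summable (fun z : HCryst.Lat d => mnormR (q0 z)) ∧
      (∀ a b : I2 n, Continuous fun θ : Fin d → ℝ => fourierM d n q0 θ a b) := by
  haveI hP : IsProbabilityMeasure μ₀ := hprob.1
  obtain ⟨hFV, he⟩ := hS3
  obtain ⟨_, _, hlim, _⟩ := hS2
  have he0 : 0 ≤ e₀ :=
    le_trans (Finset.sum_nonneg fun c _ => qmat_diag_nonneg μ₀ 0 c) (he 0)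
  set g : ℝ → ℝ := fun r => Real.sqrt (phiMix d n μ₀ r) with hg
  have hg0 : ∀ r, 0 ≤ g r := fun r => Real.sqrt_nonneg _
  have hg1 : ∀ r, g r ≤ 1 := fun r => by
    rw [hg]
    calc Real.sqrt (phiMix d n μ₀ r) ≤ Real.sqrt 1 :=
          Real.sqrt_le_sqrt (phiMix_le_one μ₀ r)
      _ = 1 := Real.sqrt_one
  have hganti : Antitone g := fun r1 r2 h => Real.sqrt_le_sqrt (phiMix_antitone μ₀ h)
  have hent : ∀ (z : HCryst.Lat d) (a b : I2 n), |q0 z a b| ≤ 8 * g (znorm d z) * e₀ :=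
    fun z a b => q0_entry_bound μ₀ hS1 hFV he q0 hlim z a b
  have hnpos : (0:ℝ) < (n:ℝ) := by exact_mod_cast hn
  have part1 : ∀ z : HCryst.Lat d,
      mnormR (q0 z) ≤ 16 * n * e₀ * Real.sqrt (phiMix d n μ₀ (znorm d z)) := by
    intro z
    have hK0 : 0 ≤ 8 * g (znorm d z) * e₀ :=
      mul_nonneg (mul_nonneg (by norm_num) (hg0 _)) he0
    have hsq : ∀ a b : I2 n, (q0 z a b)^2 ≤ (8 * g (znorm d z) * e₀)^2 := fun a b => by
      rw [← sq_abs]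
      exact pow_le_pow_left₀ (abs_nonneg _) (hent z a b) 2
    have hcard : ((Fintype.card (I2 n) : ℕ) : ℝ) = 2*(n:ℝ) := by
      simp only [I2, Fintype.card_sum, Fintype.card_fin]
      push_cast
      ring
    calc mnormR (q0 z) = Real.sqrt (∑ a, ∑ b, (q0 z a b)^2) := rfl
      _ ≤ Real.sqrt (∑ _a : I2 n, ∑ _b : I2 n, (8 * g (znorm d z) * e₀)^2) := by
          refine Real.sqrt_le_sqrt (Finset.sum_le_sum fun a _ => Finset.sum_le_sum
            fun b _ => hsq a b)
      _ = Real.sqrt ((2*(n:ℝ) * (8 * g (znorm d z) * e₀))^2) := by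
          rw [Finset.sum_const, Finset.sum_const, Finset.card_univ, smul_smul, nsmul_eq_mul]
          push_cast
          rw [hcard]
          ring
      _ = 2*(n:ℝ) * (8 * g (znorm d z) * e₀) := Real.sqrt_sq (by positivity)
      _ = 16 * n * e₀ * Real.sqrt (phiMix d n μ₀ (znorm d z)) := by rw [hg]; ring
  have hsum_g : Summable (fun z : HCryst.Lat d => g (znorm d z)) :=
    summable_shell hg0 hg1 hganti hS4.2
  have part2 : Summable (fun z : HCryst.Lat d => mnormR (q0 z)) := by
    refine Summable.of_nonneg_of_le (fun z => Real.sqrt_nonneg _) (fun z => ?_)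
      (hsum_g.mul_left (16 * (n:ℝ) * e₀))
    exact part1 z
  refine ⟨16 * n, mul_pos (by norm_num) hnpos, part1, part2, ?_⟩
  intro a b
  have hcont : ∀ z : HCryst.Lat d, Continuous fun θ : Fin d → ℝ =>
      Complex.exp (Complex.I * (zdot d z θ : ℂ)) * ((q0 z a b : ℝ) : ℂ) := by
    intro z
    have hz : Continuous fun θ : Fin d → ℝ => zdot d z θ := by
      unfold HCryst.zdot
      exact continuous_finset_sum _ fun i _ => continuous_const.mul (continuous_apply i)
    exact (Complex.continuous_exp.comp
      (continuous_const.mul (Complex.continuous_ofReal.comp hz))).mul continuous_const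
  have hbound : ∀ (z : HCryst.Lat d) (θ : Fin d → ℝ),
      ‖Complex.exp (Complex.I * (zdot d z θ : ℂ)) * ((q0 z a b : ℝ) : ℂ)‖ ≤
        mnormR (q0 z) := by
    intro z θ
    rw [norm_mul]
    have h1 : ‖Complex.exp (Complex.I * (zdot d z θ : ℂ))‖ = 1 := by
      rw [Complex.norm_exp]
      simp [Complex.mul_re]
    rw [h1, one_mul, Complex.norm_real, Real.norm_eq_abs]
    exact abs_entry_le_mnormR (q0 z) a b
  exact continuous_tsum hcont part2 hbound
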